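/- arXiv:math/0505363 — 4 statements merged into one kernel-verified Lean document; each statement's English description precedes it below -/
import Mathlib

section
/- With h1, h2 as in the context, the subgroups MonoidHom.range h1 and MonoidHom.range h2 of F are not conjugate: for every w ∈ F, w • (MonoidHom.range h1) • w⁻¹ ≠ MonoidHom.range h2. -/
/-!
Conjugate subgroups have the same image in any abelian quotient. Abelianized, `range h1` is the
index-7 lattice spanned by `(2, 3)` and `(-3, -1)` in `ℤ²`, while `range h2` contains `(1, 3)`,
which is not in it: the character `(a, b) ↦ 3a - 2b mod 7` separates them.
-/

def u : FreeGroup Bool := FreeGroup.of true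
def v : FreeGroup Bool := FreeGroup.of false

/-- `h1 : u ↦ uvuvv, v ↦ UUVU`. -/
def h1 : FreeGroup Bool →* FreeGroup Bool :=
  FreeGroup.lift fun b => if b then u * v * u * v * v else u⁻¹ * u⁻¹ * v⁻¹ * u⁻¹

/-- `h2 : u ↦ vuvv, v ↦ UUVUV`. -/
def h2 : FreeGroup Bool →* FreeGroup Bool :=
  FreeGroup.lift fun b => if b then v * u * v * v else u⁻¹ * u⁻¹ * v⁻¹ * u⁻¹ * v⁻¹

theorem MonoidHom.comp_conj_of_commGroup {G A : Type*} [Group G] [CommGroup A] (f : G →* A)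
    (w : G) : f.comp (MulAut.conj w).toMonoidHom = f := by
  ext x
  simp

theorem map_conj_range_ne_range_of_character {G K A : Type*} [Group G] [Group K] [CommGroup A]
    (f : G →* A) {a b : K →* G} (ha : f.comp a = 1) {x : K} (hb : f (b x) ≠ 1) (w : G) :
    a.range.map (MulAut.conj w).toMonoidHom ≠ b.range := by
  intro heq
  have hmem : f (b x) ∈ b.range.map f := Subgroup.mem_map_of_mem f ⟨x, rfl⟩
  rw [← heq, Subgroup.map_map, f.comp_conj_of_commGroup, MonoidHom.map_range, ha,
    MonoidHom.range_one] at hmem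
  exact hb hmem

def character : FreeGroup Bool →* Multiplicative (ZMod 7) :=
  FreeGroup.lift fun b => Multiplicative.ofAdd (if b then 3 else -2)

theorem character_comp_h1 : character.comp h1 = 1 := by
  ext b
  cases b <;> decide

theorem character_h2_u : character (h2 u) ≠ 1 := by
  decide

theorem stmt_1 (w : FreeGroup Bool) :
    Subgroup.map (MulAut.conj w).toMonoidHom h1.range ≠ h2.range :=
  map_conj_range_ne_range_of_character character character_comp_h1 character_h2_u w
end

section
/- With h1, h2 as in the context, the subgroups MonoidHom.range h1 and MonoidHom.range h2 are malnormal subgroups of F. -/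
/-- A subgroup `S` of `G` is malnormal if whenever `wSw⁻¹ ∩ S` contains a nontrivial
element, `w ∈ S`. -/
def Malnormal {G : Type*} [Group G] (S : Subgroup G) : Prop :=
  ∀ w : G, (∃ x : G, x ∈ S ∧ x ≠ 1 ∧ w * x * w⁻¹ ∈ S) → w ∈ S

namespace MalAux


abbrev Ltr := Bool × Bool

def linv (c : Ltr) : Ltr := (c.1, !c.2)

@[simp] lemma linv_linv (c : Ltr) : linv (linv c) = c := by
  cases c with | mk a b => simp [linv]

lemma linv_ne (c : Ltr) : linv c ≠ c := by
  cases c with | mk a b => simp [linv]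

def NoCancel (c d : Ltr) : Prop := ¬(c.1 = d.1 ∧ c.2 = !d.2)

instance : DecidableEq Ltr := inferInstance
instance (c d : Ltr) : Decidable (NoCancel c d) := by unfold NoCancel; infer_instance

lemma nocancel_iff (c d : Ltr) : NoCancel c d ↔ d ≠ linv c := by
  cases c with | mk a b => cases d with | mk a' b' =>
    simp [NoCancel, linv, Prod.ext_iff]
    tauto

lemma nocancel_symm {c d : Ltr} (h : NoCancel c d) : NoCancel d c := by
  rw [nocancel_iff] at h ⊢
  intro he; apply h; rw [he, linv_linv]

def Reduced (w : List Ltr) : Prop := List.IsChain NoCancel w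

open FreeGroup

lemma reduce_eq_self_of_reduced : ∀ {w : List Ltr}, Reduced w → reduce w = w := by
  intro w
  induction w with
  | nil => intro; rfl
  | cons c t ih =>
    intro h
    have ht : Reduced t := h.tail
    have h2 := ih ht
    rw [reduce.cons, h2]
    cases t with
    | nil => rfl
    | cons d t' =>
      have hnc : NoCancel c d := List.isChain_cons_cons.mp h |>.1
      simp only [NoCancel] at hnc
      simp only [List.casesOn]
      rw [if_neg hnc]

lemma reduced_of_reduce_eq_self : ∀ {w : List Ltr}, reduce w = w → Reduced w := by
  have key : ∀ (w : List Ltr), reduce w = w →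
      ∀ (x : Bool) (b : Bool) (L1 L2 : List Ltr), w ≠ L1 ++ (x, b) :: (x, !b) :: L2 := by
    intro w hw x b L1 L2 hcontra
    have := @FreeGroup.reduce.not Bool _ False w L1 L2 x b
    rw [hw] at this
    exact this hcontra
  intro w hw
  have h := key w hw
  clear hw
  induction w with
  | nil => exact List.isChain_nil
  | cons c t ih =>
    cases t with
    | nil => exact List.isChain_singleton c
    | cons d t' =>
      rw [Reduced, List.isChain_cons_cons]
      constructor
      · rintro ⟨h1, h2⟩
        obtain ⟨a, bb⟩ := c
        obtain ⟨a', b'⟩ := d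
        simp only at h1 h2
        subst h1; subst h2
        exact h a (!b') [] t' (by simp)
      · apply ih
        intro x b L1 L2 hcontra
        exact h x b (c :: L1) L2 (by rw [hcontra]; rfl)

lemma reduced_toWord (g : FreeGroup Bool) : Reduced (toWord g) :=
  reduced_of_reduce_eq_self (reduce_toWord g)

lemma reduced_infix {w w' : List Ltr} (h : Reduced w) (h' : w' <:+: w) : Reduced w' :=
  List.IsChain.infix h h'

@[simp] lemma invRev_cons (c : Ltr) (w : List Ltr) :
    invRev (c :: w) = invRev w ++ [linv c] := by
  simp [invRev, linv]

@[simp] lemma invRev_concat (c : Ltr) (w : List Ltr) :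
    invRev (w ++ [c]) = linv c :: invRev w := by
  simp [invRev, linv]

@[simp] lemma invRev_singleton (c : Ltr) : invRev [c] = [linv c] := by
  simp [invRev, linv]

lemma reduced_invRev {w : List Ltr} (h : Reduced w) : Reduced (invRev w) := by
  induction w with
  | nil => exact List.isChain_nil
  | cons c t ih =>
    rw [invRev_cons]
    rcases t with _ | ⟨d, t'⟩
    · simp [Reduced]
    · have h1 : NoCancel c d := List.isChain_cons_cons.mp h |>.1
      have h2 : Reduced (invRev (d :: t')) := ih h.tail
      apply List.IsChain.append h2 (List.isChain_singleton _)
      intro x hx y hy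
      rw [invRev_cons] at hx
      rw [List.getLast?_append_of_ne_nil _ (by simp)] at hx
      simp at hx hy
      subst hx; subst hy
      have := nocancel_symm h1
      rw [nocancel_iff] at this ⊢
      intro hc
      apply this
      have := congrArg linv hc
      rwa [linv_linv, linv_linv] at this

lemma mk_cancel (c : Ltr) : mk [c] * mk [linv c] = (1 : FreeGroup Bool) := by
  have : mk [linv c] = (mk [c])⁻¹ := by
    rw [inv_mk, invRev_singleton]
  rw [this, mul_inv_cancel]



lemma invRev_append (P Q : List Ltr) : invRev (P ++ Q) = invRev Q ++ invRev P := by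
  simp [invRev]

lemma conj_ne_one {G : Type*} [Group G] {a x : G} (hx : x ≠ 1) : a * x * a⁻¹ ≠ 1 := by
  intro h
  apply hx
  have h2 : a * x * a⁻¹ = a * 1 * a⁻¹ := by simpa using h
  exact mul_left_cancel (mul_right_cancel h2)

lemma mk_linv_eq_inv (c : Ltr) : (mk [linv c] : FreeGroup Bool) = (mk [c])⁻¹ := by
  rw [inv_mk, invRev_singleton]

lemma mk_cancel' (c : Ltr) : (mk [linv c] : FreeGroup Bool) * mk [c] = 1 := by
  have := mk_cancel (linv c); rwa [linv_linv] at this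

lemma toWord_mk_singleton (c : Ltr) : (mk [c] : FreeGroup Bool).toWord = [c] := by
  rw [toWord_mk, reduce_singleton]

section Automaton

open FreeGroup

variable (δ : Fin 5 → Ltr → Option (Fin 5))

def runO (o : Option (Fin 5)) (w : List Ltr) : Option (Fin 5) :=
  w.foldl (fun o c => o.bind (fun s => δ s c)) o

@[simp] lemma runO_nil (o : Option (Fin 5)) : runO δ o [] = o := rfl

@[simp] lemma runO_none (w : List Ltr) : runO δ none w = none := by
  induction w with
  | nil => rfl
  | cons c t ih => simpa [runO, List.foldl_cons] using ih

lemma runO_cons (s : Fin 5) (c : Ltr) (w : List Ltr) :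
    runO δ (some s) (c :: w) = runO δ (δ s c) w := by
  simp [runO, List.foldl_cons]

lemma runO_append (o : Option (Fin 5)) (w1 w2 : List Ltr) :
    runO δ o (w1 ++ w2) = runO δ (runO δ o w1) w2 := by
  simp [runO, List.foldl_append]

lemma runO_cons_some {s t : Fin 5} {c : Ltr} {w : List Ltr}
    (h : runO δ (some s) (c :: w) = some t) :
    ∃ q, δ s c = some q ∧ runO δ (some q) w = some t := by
  rw [runO_cons] at h
  rcases hq : δ s c with _ | q
  · rw [hq] at h; simp at h
  · exact ⟨q, rfl, by rwa [hq] at h⟩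

lemma runO_prefix_some {s t : Fin 5} {w1 w2 : List Ltr}
    (h : runO δ (some s) (w1 ++ w2) = some t) :
    ∃ q, runO δ (some s) w1 = some q := by
  rw [runO_append] at h
  rcases hq : runO δ (some s) w1 with _ | q
  · rw [hq] at h; simp at h
  · exact ⟨q, rfl⟩

lemma runO_concat_some {s t : Fin 5} {c : Ltr} {w : List Ltr}
    (h : runO δ (some s) (w ++ [c]) = some t) :
    ∃ q, runO δ (some s) w = some q ∧ δ q c = some t := by
  obtain ⟨q, hq⟩ := runO_prefix_some δ h
  refine ⟨q, hq, ?_⟩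
  rw [runO_append, hq] at h
  simpa [runO_cons] using h

variable (Hinv : ∀ (s t : Fin 5) (c : Ltr), δ s c = some t → δ t (linv c) = some s)

include Hinv

lemma step_inj {s s' t : Fin 5} {c : Ltr} (h1 : δ s c = some t) (h2 : δ s' c = some t) :
    s = s' := by
  have e1 := Hinv _ _ _ h1
  have e2 := Hinv _ _ _ h2
  rw [e1] at e2; injection e2

lemma runO_invRev {s t : Fin 5} {w : List Ltr} (h : runO δ (some s) w = some t) :
    runO δ (some t) (invRev w) = some s := by
  induction w generalizing s with
  | nil => simp_all
  | cons c w' ih =>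
    obtain ⟨q, hq, hrest⟩ := runO_cons_some δ h
    rw [invRev_cons, runO_append, ih hrest]
    simp [runO_cons, Hinv _ _ _ hq]

lemma runO_invRev' {s t : Fin 5} {w : List Ltr} (h : runO δ (some s) (invRev w) = some t) :
    runO δ (some t) w = some s := by
  have := runO_invRev δ Hinv h
  rwa [invRev_invRev] at this

lemma runO_reduce {w : List Ltr} {s t : Fin 5} (h : runO δ (some s) w = some t) :
    runO δ (some s) (reduce w) = some t := by
  induction w generalizing s with
  | nil => simpa using h
  | cons c w' ih =>
    obtain ⟨q, hq, hrest⟩ := runO_cons_some δ h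
    have ih' := ih hrest
    rw [reduce.cons]
    rcases hred : reduce w' with _ | ⟨d, ds⟩
    · rw [hred] at ih'
      simp only [runO_nil, Option.some.injEq] at ih'
      subst ih'
      simpa [runO_cons] using hq
    · rw [hred] at ih'
      by_cases hc : c.1 = d.1 ∧ c.2 = !d.2
      · simp only [List.casesOn, if_pos hc]
        have hd : d = linv c := by
          obtain ⟨x, b⟩ := c; obtain ⟨y, b'⟩ := d
          simp only at hc
          obtain ⟨h1, h2⟩ := hc
          simp only [linv, ← h1, Prod.mk.injEq, true_and]
          cases b <;> cases b' <;> first | exact h2 | simp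
        obtain ⟨q', hq', hrest'⟩ := runO_cons_some δ ih'
        rw [hd] at hq'
        have : q' = s := by
          have := Hinv _ _ _ hq
          rw [this] at hq'; injection hq'; omega
        rwa [this] at hrest'
      · simp only [List.casesOn, if_neg hc]
        rw [runO_cons, hq]
        exact ih'

lemma runO_mul {g h : FreeGroup Bool} {s t r : Fin 5}
    (h1 : runO δ (some s) (toWord g) = some t) (h2 : runO δ (some t) (toWord h) = some r) :
    runO δ (some s) (toWord (g * h)) = some r := by
  have hmk : g * h = mk (toWord g ++ toWord h) := by
    rw [← mul_mk, mk_toWord, mk_toWord]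
  rw [hmk, toWord_mk]
  apply runO_reduce δ Hinv
  rw [runO_append, h1]
  exact h2

lemma runO_inv {g : FreeGroup Bool} {s t : Fin 5}
    (h : runO δ (some s) (toWord g) = some t) :
    runO δ (some t) (toWord g⁻¹) = some s := by
  rw [toWord_inv]
  exact runO_invRev δ Hinv h

end Automaton

open FreeGroup in
lemma cancel_decomp : ∀ (B A : List Ltr), Reduced A → Reduced B →
    ∃ A₀ D B₀, A = A₀ ++ D ∧ B = invRev D ++ B₀ ∧ reduce (A ++ B) = A₀ ++ B₀ := by
  intro B
  induction B with
  | nil =>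
    intro A hA _
    exact ⟨A, [], [], by simp, by simp, by simpa using reduce_eq_self_of_reduced hA⟩
  | cons b B' ih =>
    intro A hA hB
    rcases A.eq_nil_or_concat with rfl | ⟨A'', α, hAe⟩
    · exact ⟨[], [], b :: B', by simp, by simp, by simpa using reduce_eq_self_of_reduced hB⟩
    subst hAe
    rw [List.concat_eq_append] at *
    by_cases hc : α = linv b
    · have hb : b = linv α := by rw [hc, linv_linv]
      have hA'' : Reduced A'' := List.IsChain.prefix hA ⟨[α], rfl⟩
      have hmkc : (mk [α] : FreeGroup Bool) * mk [linv α] = 1 := mk_cancel α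
      have hB' : Reduced B' := hB.tail
      have hmk1 : (mk ((A'' ++ [α]) ++ b :: B') : FreeGroup Bool) = mk (A'' ++ B') := by
        have e1 : (A'' ++ [α]) ++ b :: B' = A'' ++ ([α] ++ ([b] ++ B')) := by simp
        rw [e1, ← mul_mk, ← mul_mk, ← mul_mk]
        rw [hb, ← mul_assoc (mk [α]), hmkc, one_mul, mul_mk]
      have key : reduce ((A'' ++ [α]) ++ b :: B') = reduce (A'' ++ B') :=
        reduce.sound hmk1
      obtain ⟨A₀, D, B₀, e1, e2, e3⟩ := ih A'' hA'' hB'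
      refine ⟨A₀, D ++ [α], B₀, ?_, ?_, ?_⟩
      · rw [e1]; simp
      · rw [invRev_concat, ← hb, e2]; simp
      · rw [key, e3]
    · have hred : Reduced ((A'' ++ [α]) ++ b :: B') := by
        rw [Reduced, List.isChain_append]
        refine ⟨hA, hB, ?_⟩
        intro x hx y hy
        rw [List.getLast?_append_of_ne_nil _ (by simp)] at hx
        simp at hx hy
        subst hx; subst hy
        rw [nocancel_iff]
        intro hcontra
        apply hc
        rw [hcontra, linv_linv]
      exact ⟨A'' ++ [α], [], b :: B', by simp, by simp, reduce_eq_self_of_reduced hred⟩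

section Pairs

open FreeGroup

variable (δ : Fin 5 → Ltr → Option (Fin 5))
variable (Hinv : ∀ (s t : Fin 5) (c : Ltr), δ s c = some t → δ t (linv c) = some s)
variable (parent : Fin 5 × Fin 5 → Option Ltr) (depth : Fin 5 × Fin 5 → ℕ)
variable (HT1 : ∀ (p q : Fin 5 × Fin 5) (c : Ltr), p.1 ≠ p.2 →
    δ p.1 c = some q.1 → δ p.2 c = some q.2 →
    (parent p = some c ∧ depth p = depth q + 1) ∨
    (parent q = some (linv c) ∧ depth q = depth p + 1))

include Hinv HT1

lemma down : ∀ (w : List Ltr) (c₀ : Ltr) (p q : Fin 5 × Fin 5), p.1 ≠ p.2 →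
    parent p = some (linv c₀) → Reduced (c₀ :: w) →
    runO δ (some p.1) w = some q.1 → runO δ (some p.2) w = some q.2 →
    depth p ≤ depth q := by
  intro w
  induction w with
  | nil =>
    intro c₀ p q _ _ _ h1 h2
    simp only [runO_nil, Option.some.injEq] at h1 h2
    have : p = q := Prod.ext h1 h2
    rw [this]
  | cons c w' ih =>
    intro c₀ p q hpd hpar hred h1 h2
    obtain ⟨t1, ht1, hr1⟩ := runO_cons_some δ h1
    obtain ⟨t2, ht2, hr2⟩ := runO_cons_some δ h2
    have htd : t1 ≠ t2 := by
      intro he; rw [he] at ht1; exact hpd (step_inj δ Hinv ht1 ht2)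
    rcases HT1 p (t1, t2) c hpd ht1 ht2 with ⟨hp, _⟩ | ⟨hp, hd⟩
    · exfalso
      have hnc : NoCancel c₀ c := List.isChain_cons_cons.mp hred |>.1
      rw [nocancel_iff] at hnc
      apply hnc
      rw [hpar] at hp
      injection hp with hp
      rw [← hp]
    · have := ih c (t1, t2) q htd hp hred.tail hr1 hr2
      omega

lemma no_double_loop : ∀ (n : ℕ) (w : List Ltr), w.length ≤ n → Reduced w → w ≠ [] →
    ∀ s s' : Fin 5, runO δ (some s) w = some s → runO δ (some s') w = some s' → s = s' := by
  intro n
  induction n with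
  | zero =>
    intro w hlen _ hne
    interval_cases h : w.length
    · simp [List.length_eq_zero_iff] at h; exact absurd h hne
  | succ n ihn =>
    intro w hlen hred hne s s' h1 h2
    by_contra hss
    rcases w with _ | ⟨c, w'⟩
    · exact hne rfl
    obtain ⟨t1, ht1, hr1⟩ := runO_cons_some δ h1
    obtain ⟨t2, ht2, hr2⟩ := runO_cons_some δ h2
    have htd : t1 ≠ t2 := by
      intro he; rw [he] at ht1; exact hss (step_inj δ Hinv ht1 ht2)
    rcases HT1 (s, s') (t1, t2) c hss ht1 ht2 with ⟨hpar, hdep⟩ | ⟨hp, hd⟩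
    · -- p is child of (t1,t2)?? no: parent (s,s') = some c: use reversed word
      have hi1 : runO δ (some s) (invRev (c :: w')) = some s := runO_invRev δ Hinv h1
      have hi2 : runO δ (some s') (invRev (c :: w')) = some s' := runO_invRev δ Hinv h2
      have hredI : Reduced (invRev (c :: w')) := reduced_invRev hred
      rcases List.eq_nil_or_concat (c :: w') with habs | ⟨w'', d, hw⟩
      · simp at habs
      rw [List.concat_eq_append] at hw
      rw [hw, invRev_concat] at hi1 hi2 hredI
      obtain ⟨r1, hs1, hq1⟩ := runO_cons_some δ hi1
      obtain ⟨r2, hs2, hq2⟩ := runO_cons_some δ hi2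
      have hrd : r1 ≠ r2 := by
        intro he; rw [he] at hs1; exact hss (step_inj δ Hinv hs1 hs2)
      rcases HT1 (s, s') (r1, r2) (linv d) hss hs1 hs2 with ⟨hpar2, _⟩ | ⟨hp2, hd2⟩
      · -- parent (s,s') = some (linv d) and also some c: d = linv c: extract middle
        rw [hpar] at hpar2
        injection hpar2 with he
        have hdc : d = linv c := by rw [he, linv_linv]
        rcases w'' with _ | ⟨c'', mid⟩
        · simp at hw
          obtain ⟨he1, he2⟩ := hw
          apply linv_ne c
          rw [← he1] at he
          exact he.symm
        · simp only [List.cons_append] at hw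
          injection hw with hce hwe
          rw [hwe] at hr1 hr2
          obtain ⟨q1, hq1', hs1'⟩ := runO_concat_some δ hr1
          obtain ⟨q2, hq2', hs2'⟩ := runO_concat_some δ hr2
          have e1 : δ s (linv d) = some q1 := Hinv _ _ _ hs1'
          have e2 : δ s' (linv d) = some q2 := Hinv _ _ _ hs2'
          rw [he] at ht1 ht2
          rw [e1] at ht1; rw [e2] at ht2
          injection ht1 with ht1e; injection ht2 with ht2e
          rw [ht1e] at hq1'; rw [ht2e] at hq2'
          -- mid is a loop at t1 and t2
          have hmidne : mid ≠ [] := by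
            rintro rfl
            rw [hwe] at hred
            simp only [List.nil_append] at hred
            have hnc : NoCancel c d := List.isChain_cons_cons.mp hred |>.1
            rw [nocancel_iff] at hnc
            exact hnc hdc
          have hmidred : Reduced mid := by
            apply reduced_infix hred
            refine ⟨[c], [d], ?_⟩
            rw [hwe]; simp
          have hmidlen : mid.length ≤ n := by
            have : w'.length ≤ n := by simpa using hlen
            rw [hwe] at this; simp at this; omega
          exact htd (ihn mid hmidlen hmidred hmidne t1 t2 hq1' hq2')
      · -- (r1,r2) is child: descend along reversed word
        have := down δ Hinv parent depth HT1 (invRev w'') (linv d) (r1, r2) (s, s')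
          hrd (by simpa using hp2) hredI hq1 hq2
        omega
    · -- (t1,t2) is child of (s,s'): descend
      have := down δ Hinv parent depth HT1 w' c (t1, t2) (s, s') htd hp hred hr1 hr2
      omega

end Pairs

section Psi

open FreeGroup

variable (δ : Fin 5 → Ltr → Option (Fin 5))
variable (Hinv : ∀ (s t : Fin 5) (c : Ltr), δ s c = some t → δ t (linv c) = some s)
variable (parent : Fin 5 × Fin 5 → Option Ltr) (depth : Fin 5 × Fin 5 → ℕ)
variable (HT1 : ∀ (p q : Fin 5 × Fin 5) (c : Ltr), p.1 ≠ p.2 →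
    δ p.1 c = some q.1 → δ p.2 c = some q.2 →
    (parent p = some c ∧ depth p = depth q + 1) ∨
    (parent q = some (linv c) ∧ depth q = depth p + 1))

include Hinv HT1

omit Hinv HT1 in
lemma run_single' {s : Fin 5} (c : Ltr) : runO δ (some s) [c] = δ s c := by
  rw [runO_cons]; simp

lemma psi : ∀ (n : ℕ) (g : FreeGroup Bool), (toWord g).length ≤ n →
    ∀ (x : FreeGroup Bool) (s s' : Fin 5), x ≠ 1 →
    runO δ (some s) (toWord x) = some s →
    runO δ (some s') (toWord (g * x * g⁻¹)) = some s' →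
    runO δ (some s') (toWord g) = some s := by
  intro n
  induction n with
  | zero =>
    intro g hlen x s s' hx1 hxs hy
    have hG : toWord g = [] := by
      have := List.length_eq_zero_iff.mp (Nat.le_zero.mp hlen)
      exact this
    have hg1 : g = 1 := toWord_eq_nil_iff.mp hG
    rw [hg1] at hy
    simp only [one_mul, inv_one, mul_one] at hy
    have := no_double_loop δ Hinv parent depth HT1 (toWord x).length (toWord x) le_rfl
      (reduced_toWord x) (fun h => hx1 (toWord_eq_nil_iff.mp h)) s s' hxs hy
    rw [hG, runO_nil, this]
  | succ m ihn =>
    intro g hlen x s s' hx1 hxs hy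
    rcases hG : toWord g with _ | ⟨e, R⟩
    · have hg1 : g = 1 := toWord_eq_nil_iff.mp hG
      rw [hg1] at hy
      simp only [one_mul, inv_one, mul_one] at hy
      have := no_double_loop δ Hinv parent depth HT1 (toWord x).length (toWord x) le_rfl
        (reduced_toWord x) (fun h => hx1 (toWord_eq_nil_iff.mp h)) s s' hxs hy
      rw [runO_nil, this]
    have hgmk : g = mk (e :: R) := by rw [← hG, mk_toWord]
    have hredG : Reduced (e :: R) := by rw [← hG]; exact reduced_toWord g
    have hRred : Reduced R := hredG.tail
    have hlenR : R.length ≤ m := by rw [hG] at hlen; simpa using hlen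
    rcases hq : δ s' e with _ | q
    · -- first letter of g undefined at s'
      rcases List.eq_nil_or_concat (e :: R) with habs | ⟨ini, d, hw⟩
      · simp at habs
      rw [List.concat_eq_append] at hw
      have hini_red : Reduced ini := List.IsChain.prefix hredG ⟨[d], hw.symm⟩
      rcases hp : δ s (linv d) with _ | σ
      · -- both undefined : contradiction
        exfalso
        have hXred : Reduced (toWord x) := reduced_toWord x
        obtain ⟨G₀, D, X₁, eG, eX, eRed⟩ :=
          cancel_decomp (toWord x) (e :: R) hredG hXred
        rcases G₀ with _ | ⟨g₀, G₀'⟩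
        · -- g fully cancels into x
          simp only [List.nil_append] at eG
          rw [← eG] at eX
          rw [eX] at hxs
          obtain ⟨ω, hω⟩ := runO_prefix_some δ hxs
          have h2 : runO δ (some ω) (e :: R) = some s := runO_invRev' δ Hinv hω
          rw [hw] at h2
          obtain ⟨β, _, hβ⟩ := runO_concat_some δ h2
          have := Hinv _ _ _ hβ
          rw [hp] at this
          exact absurd this (by simp)
        · have hg₀ : g₀ = e := by
            simp only [List.cons_append] at eG
            injection eG with h1 _
            exact h1.symm
          subst hg₀
          have htgx : toWord (g * x) = (g₀ :: G₀') ++ X₁ := by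
            have h0 : g * x = mk ((g₀ :: R) ++ toWord x) := by
              rw [hgmk, ← mul_mk, mk_toWord]
            rw [h0, toWord_mk, eRed]
          have hAred : Reduced ((g₀ :: G₀') ++ X₁) := by
            rw [← htgx]; exact reduced_toWord _
          have hBred : Reduced (invRev (g₀ :: R)) := reduced_invRev hredG
          obtain ⟨A₀, D₂, B₂, f1, f2, f3⟩ :=
            cancel_decomp (invRev (g₀ :: R)) ((g₀ :: G₀') ++ X₁) hAred hBred
          have hginv_mk : g⁻¹ = mk (invRev (g₀ :: R)) := by
            have h0 : g⁻¹ = mk (toWord g⁻¹) := (mk_toWord).symm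
            rw [toWord_inv, hG] at h0
            exact h0
          have htwy : toWord (g * x * g⁻¹) = A₀ ++ B₂ := by
            have hy_eq : g * x * g⁻¹ = mk (((g₀ :: G₀') ++ X₁) ++ invRev (g₀ :: R)) := by
              rw [← mul_mk]
              congr 1
              rw [← htgx, mk_toWord]
            rw [hy_eq, toWord_mk, f3]
          rcases A₀ with _ | ⟨a₀, A₀'⟩
          · -- whole (g*x) cancels from the right
            simp only [List.nil_append] at f1 f2 f3
            rw [← f1] at f2
            have hM : g₀ :: R = invRev B₂ ++ ((g₀ :: G₀') ++ X₁) := by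
              have h0 := congrArg invRev f2
              rw [invRev_invRev, invRev_append, invRev_invRev] at h0
              exact h0
            have hMne : B₂ ≠ [] := by
              rintro rfl
              have h0 : g * x * g⁻¹ = 1 := toWord_eq_nil_iff.mp (by rw [htwy]; rfl)
              exact conj_ne_one hx1 h0
            rcases List.eq_nil_or_concat B₂ with habs2 | ⟨Mini, mlast, hM2⟩
            · exact hMne habs2
            rw [List.concat_eq_append] at hM2
            rw [htwy, List.nil_append, hM2] at hy
            obtain ⟨β, _, hβ⟩ := runO_concat_some δ hy
            have hβ' := Hinv _ _ _ hβ
            have hee : g₀ = linv mlast := by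
              rw [hM2, invRev_concat] at hM
              simp only [List.cons_append] at hM
              injection hM with h1 _
            rw [← hee] at hβ'
            rw [hq] at hβ'
            exact absurd hβ' (by simp)
          · -- toWord y begins with g₀ : contradiction with δ s' g₀ = none
            have ha₀ : a₀ = g₀ := by
              simp only [List.cons_append] at f1
              injection f1 with h1 _
              exact h1.symm
            rw [htwy, ha₀] at hy
            rw [List.cons_append, runO_cons, hq] at hy
            rw [runO_none] at hy
            exact absurd hy (by simp)
      · -- peel last letter d
        have hgi : toWord g⁻¹ = linv d :: invRev ini := by
          rw [toWord_inv, hG, hw, invRev_concat]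
        have hginv_eq : g⁻¹ = mk [linv d] * mk (invRev ini) := by
          rw [← mk_toWord (x := g⁻¹), hgi, mul_mk]
          rfl
        set g'' : FreeGroup Bool := g * mk [linv d] with hg''def
        have hg''inv : g''⁻¹ = mk (invRev ini) := by
          rw [hg''def, mul_inv_rev, hginv_eq, mk_linv_eq_inv, ← mul_assoc]
          rw [inv_inv, mul_inv_cancel, one_mul]
        have htg'' : toWord g'' = ini := by
          have h1 : toWord (g''⁻¹) = invRev ini := by
            rw [hg''inv, toWord_mk, reduce_eq_self_of_reduced (reduced_invRev hini_red)]
          have h2 : toWord g'' = invRev (toWord g''⁻¹) := by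
            conv_lhs => rw [show g'' = (g''⁻¹)⁻¹ from (inv_inv _).symm]
            rw [toWord_inv]
          rw [h2, h1, invRev_invRev]
        set x' : FreeGroup Bool := mk [d] * x * mk [linv d] with hx'def
        have hx'1 : x' ≠ 1 := by
          rw [hx'def, mk_linv_eq_inv]
          exact conj_ne_one hx1
        have hδσd : δ σ d = some s := by
          have := Hinv _ _ _ hp
          rwa [linv_linv] at this
        have hx'loop : runO δ (some σ) (toWord x') = some σ := by
          have h1 : runO δ (some σ) (toWord (mk [d] : FreeGroup Bool)) = some s := by
            rw [toWord_mk_singleton, run_single' δ, hδσd]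
          have h2 : runO δ (some s) (toWord (mk [linv d] : FreeGroup Bool)) = some σ := by
            rw [toWord_mk_singleton, run_single' δ, hp]
          exact runO_mul δ Hinv (runO_mul δ Hinv h1 hxs) h2
        have hconj : g'' * x' * g''⁻¹ = g * x * g⁻¹ := by
          rw [hg''def, hx'def, mk_linv_eq_inv, mul_inv_rev, inv_inv]
          group
        have hy'' : runO δ (some s') (toWord (g'' * x' * g''⁻¹)) = some s' := by
          rw [hconj]; exact hy
        have hlen'' : (toWord g'').length ≤ m := by
          rw [htg'']
          have : (e :: R).length = ini.length + 1 := by rw [hw]; simp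
          simp only [List.length_cons] at this
          omega
        have hrec := ihn g'' hlen'' x' σ s' hx'1 hx'loop hy''
        rw [htg''] at hrec
        rw [hw, runO_append, hrec, run_single' δ]
        exact hδσd
    · -- peel first letter e
      set g' : FreeGroup Bool := mk [linv e] * g with hg'def
      have htg' : toWord g' = R := by
        have h1 : g' = mk R := by
          rw [hg'def, hgmk]
          have h2 : (mk (e :: R) : FreeGroup Bool) = mk [e] * mk R := by
            rw [mul_mk]; rfl
          rw [h2, ← mul_assoc, mk_cancel' e, one_mul]
        rw [h1, toWord_mk, reduce_eq_self_of_reduced hRred]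
      have hg'inv : g'⁻¹ = g⁻¹ * mk [e] := by
        rw [hg'def, mul_inv_rev, mk_linv_eq_inv, inv_inv]
      have hconj : g' * x * g'⁻¹ = mk [linv e] * (g * x * g⁻¹) * mk [e] := by
        rw [hg'def, hg'inv]
        group
      have hz : runO δ (some q) (toWord (g' * x * g'⁻¹)) = some q := by
        rw [hconj]
        have h1 : runO δ (some q) (toWord (mk [linv e] : FreeGroup Bool)) = some s' := by
          rw [toWord_mk_singleton, run_single' δ, Hinv _ _ _ hq]
        have h2 : runO δ (some s') (toWord (mk [e] : FreeGroup Bool)) = some q := by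
          rw [toWord_mk_singleton, run_single' δ, hq]
        exact runO_mul δ Hinv (runO_mul δ Hinv h1 hy) h2
      have hrec := ihn g' (by rw [htg']; exact hlenR) x s q hx1 hxs hz
      rw [htg'] at hrec
      rw [runO_cons, hq]
      exact hrec

end Psi

section Lang

open FreeGroup

variable (δ : Fin 5 → Ltr → Option (Fin 5))
variable (Hinv : ∀ (s t : Fin 5) (c : Ltr), δ s c = some t → δ t (linv c) = some s)

def SG : Subgroup (FreeGroup Bool) where
  carrier := {g | runO δ (some 0) (toWord g) = some 0}
  one_mem' := by simp [toWord_one]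
  mul_mem' := fun ha hb => runO_mul δ Hinv ha hb
  inv_mem' := fun ha => runO_inv δ Hinv ha

lemma mem_SG {g : FreeGroup Bool} :
    g ∈ SG δ Hinv ↔ runO δ (some 0) (toWord g) = some 0 := Iff.rfl

lemma SG_le_closure (gens : Set (FreeGroup Bool))
    (Hdec : ∀ w : List Ltr, Reduced w → runO δ (some 0) w = some 0 → w ≠ [] →
      ∃ P rest, w = P ++ rest ∧ P ≠ [] ∧ runO δ (some 0) P = some 0 ∧
        mk P ∈ Subgroup.closure gens) :
    ∀ g, g ∈ SG δ Hinv → g ∈ Subgroup.closure gens := by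
  have key : ∀ (n : ℕ) (g : FreeGroup Bool), (toWord g).length ≤ n →
      g ∈ SG δ Hinv → g ∈ Subgroup.closure gens := by
    intro n
    induction n with
    | zero =>
      intro g hlen _
      have : g = 1 := toWord_eq_nil_iff.mp (List.length_eq_zero_iff.mp (Nat.le_zero.mp hlen))
      rw [this]; exact one_mem _
    | succ m ih =>
      intro g hlen hg
      by_cases hne : toWord g = []
      · rw [toWord_eq_nil_iff.mp hne]; exact one_mem _
      obtain ⟨P, rest, hsplit, hPne, hPrun, hPmem⟩ :=
        Hdec (toWord g) (reduced_toWord g) hg hne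
      have hrest_red : Reduced rest := List.IsChain.suffix (reduced_toWord g) ⟨P, hsplit.symm⟩
      have htrest : toWord (mk rest) = rest := by
        rw [toWord_mk, reduce_eq_self_of_reduced hrest_red]
      have hgsplit : g = mk P * mk rest := by
        rw [mul_mk, ← hsplit, mk_toWord]
      have hrest_run : runO δ (some 0) rest = some 0 := by
        have := hg
        rw [mem_SG, hsplit, runO_append, hPrun] at this
        exact this
      have hrest_len : rest.length ≤ m := by
        have h0 : (toWord g).length = P.length + rest.length := by
          rw [hsplit, List.length_append]
        have h1 : 1 ≤ P.length := by
          rcases P with _ | _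
          · exact absurd rfl hPne
          · simp
        omega
      have : mk rest ∈ Subgroup.closure gens := by
        apply ih (mk rest) (by rw [htrest]; exact hrest_len)
        rw [mem_SG, htrest]
        exact hrest_run
      rw [hgsplit]
      exact mul_mem hPmem this
  intro g hg
  exact key (toWord g).length g le_rfl hg

variable (parent : Fin 5 × Fin 5 → Option Ltr) (depth : Fin 5 × Fin 5 → ℕ)
variable (HT1 : ∀ (p q : Fin 5 × Fin 5) (c : Ltr), p.1 ≠ p.2 →
    δ p.1 c = some q.1 → δ p.2 c = some q.2 →
    (parent p = some c ∧ depth p = depth q + 1) ∨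
    (parent q = some (linv c) ∧ depth q = depth p + 1))

include parent depth HT1 in
lemma malnormal_SG :
    ∀ w : FreeGroup Bool,
      (∃ x : FreeGroup Bool, x ∈ SG δ Hinv ∧ x ≠ 1 ∧ w * x * w⁻¹ ∈ SG δ Hinv) →
      w ∈ SG δ Hinv := by
  rintro w ⟨x, hxS, hx1, hconj⟩
  rw [mem_SG] at hxS hconj ⊢
  exact psi δ Hinv parent depth HT1 (toWord w).length w le_rfl x 0 0 hx1 hxS hconj

end Lang

section Words

/-- all words over the alphabet of length ≤ n -/
def allW : ℕ → List (List Ltr)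
  | 0 => [[]]
  | n + 1 =>
    [] :: ((allW n).flatMap fun w =>
      [(true, true) :: w, (true, false) :: w, (false, true) :: w, (false, false) :: w])

lemma mem_allW : ∀ (n : ℕ) (w : List Ltr), w.length ≤ n → w ∈ allW n := by
  intro n
  induction n with
  | zero =>
    intro w hw
    rw [List.length_eq_zero_iff.mp (Nat.le_zero.mp hw)]
    simp [allW]
  | succ m ih =>
    intro w hw
    rcases w with _ | ⟨c, t⟩
    · simp [allW]
    · have ht : t ∈ allW m := ih t (by simpa using hw)
      rw [allW]
      refine List.mem_cons_of_mem _ ?_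
      rw [List.mem_flatMap]
      refine ⟨t, ht, ?_⟩
      obtain ⟨a, b⟩ := c
      cases a <;> cases b <;> simp

end Words

section Decider

open FreeGroup

def chainB : List Ltr → Bool
  | [] => true
  | [_] => true
  | c :: d :: t => (!(c.1 == d.1 && c.2 == !d.2)) && chainB (d :: t)

lemma chainB_iff : ∀ w, chainB w = true ↔ Reduced w := by
  intro w
  induction w with
  | nil => simp [chainB, Reduced]
  | cons c t ih =>
    cases t with
    | nil => simp [chainB, Reduced]
    | cons d t' =>
      rw [Reduced, List.isChain_cons_cons]
      rw [show chainB (c :: d :: t') = ((!(c.1 == d.1 && c.2 == !d.2)) && chainB (d :: t')) from rfl]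
      rw [Bool.and_eq_true, ih]
      constructor
      · rintro ⟨h1, h2⟩
        refine ⟨?_, h2⟩
        intro ⟨e1, e2⟩
        rw [e1, e2] at h1
        simp at h1
      · rintro ⟨h1, h2⟩
        refine ⟨?_, h2⟩
        simp only [Bool.not_eq_true', Bool.and_eq_false_iff, beq_eq_false_iff_ne]
        by_cases he : c.1 = d.1
        · right; intro hc; exact h1 ⟨he, by simpa using hc⟩
        · left; exact he

def okB (δ : Fin 5 → Ltr → Option (Fin 5)) (PL : List (List Ltr)) (T : List Ltr) : Bool :=
  !(chainB T &&
      ((!(T.isEmpty) && (runO δ (some 0) T == some 0)) ||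
        ((T.length == 5) && (runO δ (some 0) T).isSome)))
  || PL.any fun P => T.take P.length == P

def checkAll (δ : Fin 5 → Ltr → Option (Fin 5)) (PL : List (List Ltr)) : ℕ → List Ltr → Bool
  | 0, T => okB δ PL T
  | n + 1, T => okB δ PL T &&
      (checkAll δ PL n (T ++ [(true, true)]) && checkAll δ PL n (T ++ [(true, false)]) &&
       checkAll δ PL n (T ++ [(false, true)]) && checkAll δ PL n (T ++ [(false, false)]))

lemma checkAll_ok (δ : Fin 5 → Ltr → Option (Fin 5)) (PL : List (List Ltr)) :
    ∀ (n : ℕ) (T : List Ltr), checkAll δ PL n T = true →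
      ∀ E : List Ltr, E.length ≤ n → okB δ PL (T ++ E) = true := by
  intro n
  induction n with
  | zero =>
    intro T h E hE
    rw [List.length_eq_zero_iff.mp (Nat.le_zero.mp hE)]
    simpa [checkAll] using h
  | succ m ih =>
    intro T h E hE
    rw [checkAll] at h
    simp only [Bool.and_eq_true] at h
    obtain ⟨h0, ⟨⟨h1, h2⟩, h3⟩, h4⟩ := h
    rcases E with _ | ⟨c, E'⟩
    · simpa using h0
    · have hE' : E'.length ≤ m := by simpa using hE
      have hTc : T ++ c :: E' = (T ++ [c]) ++ E' := by simp
      rw [hTc]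
      obtain ⟨a, b⟩ := c
      cases a <;> cases b
      · exact ih _ h4 E' hE'
      · exact ih _ h3 E' hE'
      · exact ih _ h2 E' hE'
      · exact ih _ h1 E' hE'

lemma okB_spec (δ : Fin 5 → Ltr → Option (Fin 5)) (PL : List (List Ltr)) (T : List Ltr)
    (h : okB δ PL T = true) (hred : Reduced T)
    (hcond : (runO δ (some 0) T = some 0 ∧ T ≠ []) ∨
      (T.length = 5 ∧ (runO δ (some 0) T).isSome)) :
    ∃ P ∈ PL, P <+: T := by
  rw [okB, Bool.or_eq_true] at h
  rcases h with h | h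
  · exfalso
    rw [Bool.not_eq_true'] at h
    have hcB : chainB T = true := (chainB_iff T).mpr hred
    have : (chainB T &&
      ((!(T.isEmpty) && (runO δ (some 0) T == some 0)) ||
        ((T.length == 5) && (runO δ (some 0) T).isSome))) = true := by
      rw [hcB, Bool.true_and, Bool.or_eq_true]
      rcases hcond with ⟨h1, h2⟩ | ⟨h1, h2⟩
      · left
        rw [Bool.and_eq_true]
        constructor
        · rw [Bool.not_eq_true']
          rcases T with _ | _
          · exact absurd rfl h2
          · rfl
        · exact beq_iff_eq.mpr h1
      · right
        rw [Bool.and_eq_true]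
        exact ⟨beq_iff_eq.mpr h1, h2⟩
    rw [h] at this
    exact Bool.false_ne_true this
  · rw [List.any_eq_true] at h
    obtain ⟨P, hPin, hPeq⟩ := h
    rw [beq_iff_eq] at hPeq
    exact ⟨P, hPin, hPeq ▸ List.take_prefix _ _⟩

lemma gen_decomp (δ : Fin 5 → Ltr → Option (Fin 5)) (PL : List (List Ltr))
    (gens : Set (FreeGroup Bool))
    (hcheck : checkAll δ PL 5 [] = true)
    (hfacts : ∀ P ∈ PL, P ≠ [] ∧ runO δ (some 0) P = some 0)
    (hmem : ∀ P ∈ PL, mk P ∈ Subgroup.closure gens) :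
    ∀ w : List Ltr, Reduced w → runO δ (some 0) w = some 0 → w ≠ [] →
      ∃ P rest, w = P ++ rest ∧ P ≠ [] ∧ runO δ (some 0) P = some 0 ∧
        mk P ∈ Subgroup.closure gens := by
  intro w hred hrun hne
  have hok : okB δ PL (w.take 5) = true := by
    have := checkAll_ok δ PL 5 [] hcheck (w.take 5)
      (by rw [List.length_take]; omega)
    simpa using this
  have hTred : Reduced (w.take 5) := List.IsChain.prefix hred (List.take_prefix 5 w)
  have hcond : (runO δ (some 0) (w.take 5) = some 0 ∧ w.take 5 ≠ []) ∨
      ((w.take 5).length = 5 ∧ (runO δ (some 0) (w.take 5)).isSome) := by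
    by_cases hl : w.length ≤ 5
    · left
      rw [List.take_of_length_le hl]
      exact ⟨hrun, hne⟩
    · right
      constructor
      · rw [List.length_take]; omega
      · obtain ⟨q, hq⟩ := runO_prefix_some δ (w1 := w.take 5) (w2 := w.drop 5)
          (by rw [List.take_append_drop]; exact hrun)
        rw [hq]; rfl
  obtain ⟨P, hPin, hPpre⟩ := okB_spec δ PL (w.take 5) hok hTred hcond
  have hPw : P <+: w := hPpre.trans (List.take_prefix 5 w)
  obtain ⟨rest, hrest⟩ := hPw
  obtain ⟨hPne, hPrun⟩ := hfacts P hPin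
  exact ⟨P, rest, hrest.symm, hPne, hPrun, hmem P hPin⟩

end Decider

section Inst1

open FreeGroup

def uL : Ltr := (true, true)
def UL : Ltr := (true, false)
def vL : Ltr := (false, true)
def VL : Ltr := (false, false)

def δ1 : Fin 5 → Ltr → Option (Fin 5) := fun s c =>
  match s.val, c.1, c.2 with
  | 0, true, true => some 1
  | 2, true, true => some 3
  | 3, true, true => some 0
  | 1, false, true => some 2
  | 3, false, true => some 4
  | 4, false, true => some 0
  | 1, true, false => some 0
  | 3, true, false => some 2
  | 0, true, false => some 3
  | 2, false, false => some 1
  | 4, false, false => some 3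
  | 0, false, false => some 4
  | _, _, _ => none

lemma Hinv1 : ∀ (s t : Fin 5) (c : Ltr), δ1 s c = some t → δ1 t (linv c) = some s := by decide

def parent1 : Fin 5 × Fin 5 → Option Ltr := fun p =>
  match p.1.val, p.2.val with
  | 3, 0 => some (true, true)
  | 2, 3 => some (true, true)
  | 3, 2 => some (true, true)
  | 1, 3 => some (true, false)
  | 1, 0 => some (true, false)
  | 3, 1 => some (true, false)
  | 4, 1 => some (false, true)
  | 4, 3 => some (false, true)
  | 2, 4 => some (false, false)
  | 2, 0 => some (false, false)
  | 4, 2 => some (false, false)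
  | 4, 0 => some (false, false)
  | _, _ => none

def depth1 : Fin 5 × Fin 5 → ℕ := fun p =>
  match p.1.val, p.2.val with
  | 3, 0 => 1
  | 2, 3 => 2
  | 1, 3 => 1
  | 4, 1 => 1
  | 2, 4 => 2
  | 1, 0 => 1
  | 3, 2 => 1
  | 4, 3 => 1
  | 2, 0 => 1
  | 3, 1 => 2
  | 4, 2 => 3
  | 4, 0 => 1
  | _, _ => 0

lemma HT1_1 : ∀ (p q : Fin 5 × Fin 5) (c : Ltr), p.1 ≠ p.2 →
    δ1 p.1 c = some q.1 → δ1 p.2 c = some q.2 →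
    (parent1 p = some c ∧ depth1 p = depth1 q + 1) ∨
    (parent1 q = some (linv c) ∧ depth1 q = depth1 p + 1) := by decide

def PL1 : List (List Ltr) :=
  [[uL,vL,uL,uL], [uL,vL,uL,vL,vL], [UL,vL,vL], [UL,UL,VL,UL], [VL,VL,uL], [VL,VL,UL,VL,UL]]

lemma check1 : checkAll δ1 PL1 5 [] = true := by decide

lemma PLfacts1 : ∀ P ∈ PL1, P ≠ [] ∧ runO δ1 (some 0) P = some 0 := by decide

def A1 : FreeGroup Bool := u * v * u * v * v
def B1 : FreeGroup Bool := u⁻¹ * u⁻¹ * v⁻¹ * u⁻¹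

lemma PLmem1 : ∀ P ∈ PL1, mk P ∈ Subgroup.closure {A1, B1} := by
  have hA : A1 ∈ Subgroup.closure {A1, B1} := Subgroup.subset_closure (by simp)
  have hB : B1 ∈ Subgroup.closure {A1, B1} := Subgroup.subset_closure (by simp)
  intro P hP
  fin_cases hP
  · rw [show (mk [uL,vL,uL,uL] : FreeGroup Bool) = B1⁻¹ by decide]
    exact inv_mem hB
  · rw [show (mk [uL,vL,uL,vL,vL] : FreeGroup Bool) = A1 by decide]
    exact hA
  · rw [show (mk [UL,vL,vL] : FreeGroup Bool) = B1 * A1 by decide]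
    exact mul_mem hB hA
  · rw [show (mk [UL,UL,VL,UL] : FreeGroup Bool) = B1 by decide]
    exact hB
  · rw [show (mk [VL,VL,uL] : FreeGroup Bool) = A1⁻¹ * B1⁻¹ by decide]
    exact mul_mem (inv_mem hA) (inv_mem hB)
  · rw [show (mk [VL,VL,UL,VL,UL] : FreeGroup Bool) = A1⁻¹ by decide]
    exact inv_mem hA

lemma range1 : h1.range = Subgroup.closure {A1, B1} := by
  rw [show h1 = FreeGroup.lift
      (fun b => if b then u * v * u * v * v else u⁻¹ * u⁻¹ * v⁻¹ * u⁻¹) from rfl]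
  rw [FreeGroup.range_lift_eq_closure]
  congr 1
  ext g
  simp only [Set.mem_range, Set.mem_insert_iff, Set.mem_singleton_iff]
  constructor
  · rintro ⟨b, rfl⟩
    cases b
    · right; rfl
    · left; rfl
  · rintro (rfl | rfl)
    · exact ⟨true, rfl⟩
    · exact ⟨false, rfl⟩

lemma memA1 : runO δ1 (some 0) (FreeGroup.toWord A1) = some 0 := by decide
lemma memB1 : runO δ1 (some 0) (FreeGroup.toWord B1) = some 0 := by decide

lemma heq1 : h1.range = SG δ1 Hinv1 := by
  rw [range1]
  apply le_antisymm
  · rw [Subgroup.closure_le]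
    rintro g (rfl | rfl)
    · exact memA1
    · exact memB1
  · intro g hg
    exact SG_le_closure δ1 Hinv1 {A1, B1}
      (gen_decomp δ1 PL1 {A1, B1} check1 PLfacts1 PLmem1) g hg

end Inst1

section Inst2

open FreeGroup

def δ2 : Fin 5 → Ltr → Option (Fin 5) := fun s c =>
  match s.val, c.1, c.2 with
  | 0, false, true => some 1
  | 2, false, true => some 3
  | 3, false, true => some 0
  | 1, true, true => some 2
  | 4, true, true => some 0
  | 3, true, true => some 4
  | 1, false, false => some 0
  | 3, false, false => some 2
  | 0, false, false => some 3
  | 2, true, false => some 1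
  | 0, true, false => some 4
  | 4, true, false => some 3
  | _, _, _ => none

lemma Hinv2 : ∀ (s t : Fin 5) (c : Ltr), δ2 s c = some t → δ2 t (linv c) = some s := by decide

def parent2 : Fin 5 × Fin 5 → Option Ltr := fun p =>
  match p.1.val, p.2.val with
  | 3, 0 => some (false, true)
  | 2, 3 => some (false, true)
  | 3, 2 => some (false, true)
  | 1, 3 => some (false, false)
  | 1, 0 => some (false, false)
  | 3, 1 => some (false, false)
  | 4, 1 => some (true, true)
  | 4, 3 => some (true, true)
  | 2, 4 => some (true, false)
  | 2, 0 => some (true, false)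
  | 4, 2 => some (true, false)
  | 4, 0 => some (true, false)
  | _, _ => none

def depth2 : Fin 5 × Fin 5 → ℕ := depth1

lemma HT1_2 : ∀ (p q : Fin 5 × Fin 5) (c : Ltr), p.1 ≠ p.2 →
    δ2 p.1 c = some q.1 → δ2 p.2 c = some q.2 →
    (parent2 p = some c ∧ depth2 p = depth2 q + 1) ∨
    (parent2 q = some (linv c) ∧ depth2 q = depth2 p + 1) := by decide

def PL2 : List (List Ltr) :=
  [[vL,uL,vL,uL,uL], [vL,uL,vL,vL], [UL,UL,vL], [UL,UL,VL,UL,VL], [VL,uL,uL], [VL,VL,UL,VL]]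

lemma check2 : checkAll δ2 PL2 5 [] = true := by decide

lemma PLfacts2 : ∀ P ∈ PL2, P ≠ [] ∧ runO δ2 (some 0) P = some 0 := by decide

def A2 : FreeGroup Bool := v * u * v * v
def B2 : FreeGroup Bool := u⁻¹ * u⁻¹ * v⁻¹ * u⁻¹ * v⁻¹

lemma PLmem2 : ∀ P ∈ PL2, mk P ∈ Subgroup.closure {A2, B2} := by
  have hA : A2 ∈ Subgroup.closure {A2, B2} := Subgroup.subset_closure (by simp)
  have hB : B2 ∈ Subgroup.closure {A2, B2} := Subgroup.subset_closure (by simp)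
  intro P hP
  fin_cases hP
  · rw [show (mk [vL,uL,vL,uL,uL] : FreeGroup Bool) = B2⁻¹ by decide]
    exact inv_mem hB
  · rw [show (mk [vL,uL,vL,vL] : FreeGroup Bool) = A2 by decide]
    exact hA
  · rw [show (mk [UL,UL,vL] : FreeGroup Bool) = B2 * A2 by decide]
    exact mul_mem hB hA
  · rw [show (mk [UL,UL,VL,UL,VL] : FreeGroup Bool) = B2 by decide]
    exact hB
  · rw [show (mk [VL,uL,uL] : FreeGroup Bool) = A2⁻¹ * B2⁻¹ by decide]
    exact mul_mem (inv_mem hA) (inv_mem hB)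
  · rw [show (mk [VL,VL,UL,VL] : FreeGroup Bool) = A2⁻¹ by decide]
    exact inv_mem hA

lemma range2 : h2.range = Subgroup.closure {A2, B2} := by
  rw [show h2 = FreeGroup.lift
      (fun b => if b then v * u * v * v else u⁻¹ * u⁻¹ * v⁻¹ * u⁻¹ * v⁻¹) from rfl]
  rw [FreeGroup.range_lift_eq_closure]
  congr 1
  ext g
  simp only [Set.mem_range, Set.mem_insert_iff, Set.mem_singleton_iff]
  constructor
  · rintro ⟨b, rfl⟩
    cases b
    · right; rfl
    · left; rfl
  · rintro (rfl | rfl)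
    · exact ⟨true, rfl⟩
    · exact ⟨false, rfl⟩

lemma memA2 : runO δ2 (some 0) (FreeGroup.toWord A2) = some 0 := by decide
lemma memB2 : runO δ2 (some 0) (FreeGroup.toWord B2) = some 0 := by decide

lemma heq2 : h2.range = SG δ2 Hinv2 := by
  rw [range2]
  apply le_antisymm
  · rw [Subgroup.closure_le]
    rintro g (rfl | rfl)
    · exact memA2
    · exact memB2
  · intro g hg
    exact SG_le_closure δ2 Hinv2 {A2, B2}
      (gen_decomp δ2 PL2 {A2, B2} check2 PLfacts2 PLmem2) g hg

end Inst2

end MalAux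

theorem stmt_2 : Malnormal h1.range ∧ Malnormal h2.range := by
  constructor
  · rw [MalAux.heq1]
    intro w hw
    exact MalAux.malnormal_SG MalAux.δ1 MalAux.Hinv1 MalAux.parent1 MalAux.depth1
      MalAux.HT1_1 w hw
  · rw [MalAux.heq2]
    intro w hw
    exact MalAux.malnormal_SG MalAux.δ2 MalAux.Hinv2 MalAux.parent2 MalAux.depth2
      MalAux.HT1_2 w hw
end

section
/- Let B be a finite type with at least two elements and F = FreeGroup B. Then f'_F(1) ≥ 2; equivalently, there exists x ∈ F and two distinct subgroups of F, each of which is the range of an admissible genus-1 representation of x. -/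
namespace SG
open FreeGroup List

/-! ### Concrete 5-state partial-injection automaton and its ℕ-coded certificate -/

def cstep : Fin 5 → Fin 5 → Option (Fin 5) :=
  ![![some 1, some 2, none, none, some 3],
    ![none, some 0, some 1, some 4, none],
    ![some 2, none, some 4, some 0, none],
    ![some 3, none, some 0, none, some 2],
    ![none, none, none, none, none]]

def cinvF : Fin 5 → Fin 5 := ![1, 0, 3, 2, 4]

lemma cstep_inv : ∀ l v w : Fin 5, cstep l v = some w ↔ cstep (cinvF l) w = some v := by decide

def certN : List ℕ := [1223, 1289, 1295, 2579, 2590, 2591, 3705, 3707, 3885, 3887, 5161, 5165, 5179, 5183, 5910, 6366, 6371, 6450, 6455, 6474, 6479, 6656, 6659, 6692, 6695, 6839, 6905, 6911, 7115, 7126, 7127, 7211, 7230, 7235, 7319, 7338, 7343, 7385, 7415, 7529, 7559, 7593, 7595, 7631, 7662, 7667, 7703, 7736, 7739, 7745, 7751, 7757, 7763, 7769, 7770, 7771, 7772, 7773, 7774, 7775]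

def tabN : ℕ → List ℕ := fun l =>
  [[1,2,5,5,3],[5,0,1,4,5],[2,5,4,0,5],[3,5,0,5,2]].getD l [5,5,5,5,5]

def cstepN (l v : ℕ) : ℕ := (tabN l).getD v 5

def digitN (c i : ℕ) : ℕ := c / 6^i % 6

def appN (c v : ℕ) : ℕ := if v < 5 then digitN c v else 5

def compN (c y : ℕ) : ℕ :=
  (List.range 5).foldr
    (fun i acc => 6^i * (if digitN c i == 5 then 5 else cstepN y (digitN c i)) + acc) 0

def iterN (c : ℕ) : ℕ → ℕ → ℕ
  | 0, v => v
  | k+1, v => appN c (iterN c k v)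

lemma chk2 : certN.all (fun c => (List.range 5).all fun y => certN.elem (compN c y)) = true := by
  decide

lemma chk3 : certN.all (fun c => (List.range 5).all fun v =>
    (([1,2,3,4,5] : List ℕ).all fun k => !(iterN c k v == v)) || (digitN c v == v)) = true := by
  decide

/-! ### Encoding of partial maps `Fin 5 → Option (Fin 5)` as naturals -/

def encL : Option (Fin 5) → ℕ := fun o => o.elim 5 Fin.val

def encM (m : Fin 5 → Option (Fin 5)) : ℕ :=
  encL (m 0) + 6 * encL (m 1) + 36 * encL (m 2) + 216 * encL (m 3) + 1296 * encL (m 4)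

lemma encL_le (o : Option (Fin 5)) : encL o ≤ 5 := by
  cases o with
  | none => simp [encL]
  | some v => simpa [encL] using Nat.le_of_lt_succ (Nat.lt_succ_of_lt v.isLt)

lemma digit_encM (m : Fin 5 → Option (Fin 5)) (i : Fin 5) :
    digitN (encM m) i.val = encL (m i) := by
  have h0 := encL_le (m 0); have h1 := encL_le (m 1); have h2 := encL_le (m 2)
  have h3 := encL_le (m 3); have h4 := encL_le (m 4)
  fin_cases i
  · show digitN (encM m) (0:ℕ) = encL (m 0)
    simp only [digitN, encM]; omega
  · show digitN (encM m) (1:ℕ) = encL (m 1)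
    simp only [digitN, encM]; omega
  · show digitN (encM m) (2:ℕ) = encL (m 2)
    simp only [digitN, encM]; omega
  · show digitN (encM m) (3:ℕ) = encL (m 3)
    simp only [digitN, encM]; omega
  · show digitN (encM m) (4:ℕ) = encL (m 4)
    simp only [digitN, encM]; omega

lemma cstepN_eq : ∀ y w : Fin 5, cstepN y.val w.val = encL (cstep y w) := by decide

lemma comp_helper (y : Fin 5) (o : Option (Fin 5)) :
    (if encL o == 5 then 5 else cstepN y.val (encL o)) = encL (o.bind (cstep y)) := by
  cases o with
  | none => simp [encL]
  | some w =>
    have hlt : w.val < 5 := w.isLt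
    have hne : ¬ ((encL (some w) == 5) = true) := by
      simp only [encL, Option.elim, beq_iff_eq]; omega
    rw [if_neg hne, show encL (some w) = w.val from rfl, cstepN_eq y w]
    rfl

lemma compN_encM (m : Fin 5 → Option (Fin 5)) (y : Fin 5) :
    compN (encM m) y.val = encM (fun v => (m v).bind (cstep y)) := by
  have e : ∀ i : Fin 5, (if digitN (encM m) i.val == 5 then 5
      else cstepN y.val (digitN (encM m) i.val)) = encL ((m i).bind (cstep y)) := by
    intro i; rw [digit_encM]; exact comp_helper y (m i)
  have h0 := e 0; have h1 := e 1; have h2 := e 2; have h3 := e 3; have h4 := e 4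
  simp only [Fin.isValue, Fin.val_zero, Fin.val_one] at h0 h1 h2 h3 h4
  show 6^0 * _ + (6^1 * _ + (6^2 * _ + (6^3 * _ + (6^4 * _ + 0)))) = _
  rw [show ((2:Fin 5) : ℕ) = 2 from rfl] at h2
  rw [show ((3:Fin 5) : ℕ) = 3 from rfl] at h3
  rw [show ((4:Fin 5) : ℕ) = 4 from rfl] at h4
  rw [h0, h1, h2, h3, h4]
  simp [encM]; ring

lemma appN_encM (m : Fin 5 → Option (Fin 5)) (o : Option (Fin 5)) :
    appN (encM m) (encL o) = encL (o.bind m) := by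
  cases o with
  | none => simp [appN, encL]
  | some v =>
    have hv : encL (some v) < 5 := by simpa [encL] using v.isLt
    rw [show (some v).bind m = m v from rfl, appN, if_pos hv]
    exact digit_encM m v

lemma iterN_encM (m : Fin 5 → Option (Fin 5)) :
    ∀ (k : ℕ) (o : Option (Fin 5)),
      iterN (encM m) k (encL o) = encL ((fun o => o.bind m)^[k] o) := by
  intro k
  induction k with
  | zero => intro o; simp [iterN]
  | succ k ih =>
    intro o
    rw [iterN, ih o, Function.iterate_succ_apply']
    exact appN_encM m _

lemma mem_compN {c : ℕ} (hc : c ∈ certN) {y : ℕ} (hy : y < 5) : compN c y ∈ certN := by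
  have h := List.all_eq_true.mp chk2 c hc
  have h2 := List.all_eq_true.mp h y (List.mem_range.mpr hy)
  exact List.mem_of_elem_eq_true h2

lemma cyc_fix {c : ℕ} (hc : c ∈ certN) {v : ℕ} (hv : v < 5) {k : ℕ}
    (hk1 : 1 ≤ k) (hk5 : k ≤ 5) (hit : iterN c k v = v) : digitN c v = v := by
  have h := List.all_eq_true.mp chk3 c hc
  have h2 := List.all_eq_true.mp h v (List.mem_range.mpr hv)
  rcases Bool.or_eq_true_iff.mp h2 with h3 | h3
  · exfalso
    have hk : k ∈ ([1,2,3,4,5] : List ℕ) := by interval_cases k <;> simp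
    have := List.all_eq_true.mp h3 k hk
    simp [hit] at this
  · simpa using h3

end SG
namespace SG2
open FreeGroup List SG

/-! ### Reduced words as `Chain'` -/

section Chain
variable {γ : Type} [DecidableEq γ]

/-- non-cancelling adjacent letters -/
def nc : (γ × Bool) → (γ × Bool) → Prop := fun x y => ¬(x.1 = y.1 ∧ x.2 = !y.2)

instance : DecidableRel (nc (γ := γ)) := fun x y => by unfold nc; infer_instance

lemma reduce_eq_self_of_chain : ∀ {L : List (γ × Bool)}, List.Chain' nc L → reduce L = L := by
  intro L
  induction L with
  | nil => intro _; rfl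
  | cons x L ih =>
    intro h
    have hL : List.Chain' nc L := List.IsChain.tail h
    rw [reduce.cons, ih hL]
    cases L with
    | nil => rfl
    | cons y t =>
      have hxy : nc x y := (List.isChain_cons_cons.mp h).1
      simp only [nc] at hxy
      simp [if_neg hxy]

lemma chain'_reduce : ∀ (L : List (γ × Bool)), List.Chain' nc (reduce L) := by
  intro L
  induction L with
  | nil => simp [List.Chain']
  | cons x L ih =>
    rw [reduce.cons]
    cases hR : reduce L with
    | nil => simp [List.Chain']
    | cons y t =>
      rw [hR] at ih
      show List.Chain' nc (if x.1 = y.1 ∧ x.2 = !y.2 then t else x :: y :: t)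
      by_cases h : x.1 = y.1 ∧ x.2 = !y.2
      · rw [if_pos h]; exact List.IsChain.tail ih
      · rw [if_neg h]; exact List.isChain_cons_cons.mpr ⟨h, ih⟩

lemma chain'_toWord (x : FreeGroup γ) : List.Chain' nc x.toWord := by
  rw [← reduce_toWord]; exact chain'_reduce _

lemma invRev_cons (x : γ × Bool) (L : List (γ × Bool)) :
    invRev (x :: L) = invRev L ++ [(x.1, !x.2)] := by
  simp [invRev]

lemma invRev_nil : invRev ([] : List (γ × Bool)) = [] := rfl

lemma mk_single_true (c : γ) : mk [(c, true)] = of c := rfl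

lemma mk_single_false (c : γ) : mk [(c, false)] = (of c)⁻¹ := by
  rw [show of c = mk [(c, true)] from rfl, inv_mk]
  rfl

/-- cyclic decomposition of a reduced word -/
lemma cyclic_decomp : ∀ (n : ℕ) (L : List (γ × Bool)), L.length ≤ n → List.Chain' nc L →
    ∃ P C, L = P ++ (C ++ invRev P) ∧ ∀ (h : C ≠ []), nc (C.getLast h) (C.head h) := by
  intro n
  induction n with
  | zero =>
    intro L hL _
    have : L = [] := List.length_eq_zero_iff.mp (Nat.le_zero.mp hL)
    exact ⟨[], [], by simp [this, invRev_nil], by simp⟩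
  | succ n ih =>
    intro L hlen hch
    match L with
    | [] => exact ⟨[], [], by simp [invRev_nil], by simp⟩
    | [x] =>
      refine ⟨[], [x], by simp [invRev_nil], ?_⟩
      intro h
      simp only [List.getLast_singleton, List.head_cons, nc]
      simp
    | x :: y :: t =>
      have htne : (y :: t) ≠ [] := by simp
      set z : γ × Bool := (y :: t).getLast htne with hz
      by_cases hzx : z.1 = x.1 ∧ z.2 = !x.2
      · -- peel off conjugating letter
        set M : List (γ × Bool) := (y :: t).dropLast with hM
        have hsplit : y :: t = M ++ [z] := (List.dropLast_append_getLast htne).symm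
        have hlen2 : t.length + 2 ≤ n + 1 := by simpa using hlen
        have hMlen : M.length ≤ n := by
          have h3 : M.length = (y :: t).length - 1 := List.length_dropLast
          simp only [List.length_cons] at h3
          omega
        have hMch : List.Chain' nc M := by
          refine List.IsChain.infix hch ⟨[x], [z], ?_⟩
          simp [← hsplit]
        obtain ⟨P, C, hPC, hcyc⟩ := ih M hMlen hMch
        refine ⟨x :: P, C, ?_, hcyc⟩
        have hzeq : z = (x.1, !x.2) := Prod.ext hzx.1 hzx.2
        calc x :: y :: t = x :: (M ++ [z]) := congrArg _ hsplit
          _ = x :: ((P ++ (C ++ invRev P)) ++ [z]) := by rw [← hPC]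
          _ = (x :: P) ++ (C ++ (invRev P ++ [(x.1, !x.2)])) := by
              rw [hzeq]; simp [List.append_assoc]
          _ = (x :: P) ++ (C ++ invRev (x :: P)) := by rw [← invRev_cons]
      · -- already cyclically reduced
        refine ⟨[], x :: y :: t, by simp [invRev_nil], ?_⟩
        intro h
        have hlast : (x :: y :: t).getLast h = z := List.getLast_cons htne
        rw [hlast]
        show nc z ((x :: y :: t).head h)
        simpa [nc] using hzx

/-- `n`-fold concatenation -/
def powList (C : List (γ × Bool)) : ℕ → List (γ × Bool)
  | 0 => []
  | n+1 => C ++ powList C n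

lemma mk_powList (C : List (γ × Bool)) : ∀ n, mk (powList C n) = (mk C) ^ n := by
  intro n
  induction n with
  | zero => simp [powList]; rfl
  | succ n ih => rw [powList, ← mul_mk, ih, pow_succ']

lemma powList_ne_nil {C : List (γ × Bool)} (hC : C ≠ []) {n : ℕ} (hn : 1 ≤ n) :
    powList C n ≠ [] := by
  cases n with
  | zero => omega
  | succ n => simp [powList, hC]

lemma head?_powList {C : List (γ × Bool)} (hC : C ≠ []) {n : ℕ} (hn : 1 ≤ n) :
    (powList C n).head? = C.head? := by
  cases n with
  | zero => omega
  | succ n =>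
    rw [powList]
    cases C with
    | nil => exact absurd rfl hC
    | cons a t => rfl

lemma getLast?_powList {C : List (γ × Bool)} (hC : C ≠ []) : ∀ {n : ℕ}, 1 ≤ n →
    (powList C n).getLast? = C.getLast? := by
  intro n
  induction n with
  | zero => omega
  | succ n ih =>
    intro _
    cases Nat.eq_zero_or_pos n with
    | inl h0 => subst h0; simp [powList]
    | inr hpos =>
      rw [powList, List.getLast?_append_of_ne_nil _ (powList_ne_nil hC hpos)]
      exact ih hpos

lemma chain'_powList {C : List (γ × Bool)} (hC : List.Chain' nc C)
    (hcyc : ∀ a ∈ C.getLast?, ∀ b ∈ C.head?, nc a b) : ∀ n, List.Chain' nc (powList C n) := by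
  intro n
  induction n with
  | zero => simp [powList, List.Chain']
  | succ n ih =>
    rw [powList]
    refine List.IsChain.append hC ih ?_
    intro a ha b hb
    rcases Nat.eq_zero_or_pos n with h0 | hpos
    · subst h0; simp [powList] at hb
    · by_cases hCnil : C = []
      · subst hCnil; simp at ha
      · rw [head?_powList hCnil hpos] at hb
        exact hcyc a ha b hb

lemma chain'_conj_pow {P C : List (γ × Bool)} (hL : List.Chain' nc (P ++ (C ++ invRev P)))
    (hC : C ≠ []) (hcyc : ∀ a ∈ C.getLast?, ∀ b ∈ C.head?, nc a b) {n : ℕ} (hn : 1 ≤ n) :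
    List.Chain' nc (P ++ (powList C n ++ invRev P)) := by
  rw [List.Chain', List.isChain_append] at hL
  obtain ⟨hP, hrest, hj1⟩ := hL
  rw [List.isChain_append] at hrest
  obtain ⟨hCch, hinv, hj2⟩ := hrest
  rw [List.Chain', List.isChain_append]
  refine ⟨hP, ?_, ?_⟩
  · rw [List.isChain_append]
    refine ⟨chain'_powList hCch hcyc n, hinv, ?_⟩
    intro a ha b hb
    rw [getLast?_powList hC hn] at ha
    exact hj2 a ha b hb
  · intro a ha b hb
    apply hj1 a ha b
    rw [List.head?_append_of_ne_nil _ (powList_ne_nil hC hn), head?_powList hC hn] at hb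
    rw [List.head?_append_of_ne_nil _ hC]
    exact hb

end Chain

end SG2
namespace SG3
open FreeGroup List SG SG2

section Auto
variable {B : Type} [DecidableEq B] (α β : B)

def codeF : B × Bool → Fin 5 := fun x =>
  if x.1 = α then (if x.2 then 0 else 1) else if x.1 = β then (if x.2 then 2 else 3) else 4

def stp : B × Bool → Fin 5 → Option (Fin 5) := fun x => cstep (codeF α β x)

def run (L : List (B × Bool)) (o : Option (Fin 5)) : Option (Fin 5) :=
  L.foldl (fun s x => s.bind (stp α β x)) o

variable {α β}

lemma run_nil (o : Option (Fin 5)) : run α β [] o = o := rfl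

lemma run_cons (x : B × Bool) (L : List (B × Bool)) (o : Option (Fin 5)) :
    run α β (x :: L) o = run α β L (o.bind (stp α β x)) := rfl

lemma run_append (L M : List (B × Bool)) (o : Option (Fin 5)) :
    run α β (L ++ M) o = run α β M (run α β L o) := by
  simp [run, List.foldl_append]

lemma run_none (L : List (B × Bool)) : run α β L none = none := by
  induction L with
  | nil => rfl
  | cons x L ih => rw [run_cons, Option.bind_none]; exact ih

lemma codeF_flip (x : B × Bool) : codeF α β (x.1, !x.2) = cinvF (codeF α β x) := by
  rcases x with ⟨c, s⟩
  by_cases h1 : c = α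
  · cases s <;> simp only [codeF, h1, if_true, if_pos rfl, Bool.not_true, Bool.not_false,
      if_false, cinvF] <;> rfl
  · by_cases h2 : c = β
    · have h3 : ¬ (β = α) := fun hh => h1 (h2.trans hh)
      cases s <;> simp only [codeF, h1, h2, h3, if_true, if_false, Bool.not_true,
        Bool.not_false, cinvF, if_neg h1, if_pos rfl] <;> rfl
    · cases s <;> simp only [codeF, if_neg h1, if_neg h2, Bool.not_true, Bool.not_false,
        cinvF] <;> rfl

lemma stp_inv {x : B × Bool} {v w : Fin 5} (h : stp α β x v = some w) :
    stp α β (x.1, !x.2) w = some v := by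
  unfold stp
  rw [codeF_flip]
  exact (cstep_inv _ v w).mp h

lemma run_redstep {L L' : List (B × Bool)} (h : Red.Step L L') {o : Option (Fin 5)}
    {w : Fin 5} (hr : run α β L o = some w) : run α β L' o = some w := by
  cases h with
  | @not L₁ L₂ x b =>
    rw [run_append] at hr ⊢
    rw [run_cons, run_cons] at hr
    cases h1 : run α β L₁ o with
    | none => rw [h1, Option.bind_none, Option.bind_none, run_none] at hr; exact absurd hr (by simp)
    | some p =>
      rw [h1] at hr
      cases h2 : stp α β (x, b) p with
      | none => rw [Option.bind_some, h2, Option.bind_none, run_none] at hr; exact absurd hr (by simp)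
      | some q =>
        rw [Option.bind_some, h2, Option.bind_some] at hr
        have h3 : stp α β (x, !b) q = some p := stp_inv h2
        rw [h3] at hr
        exact hr

lemma run_red {L L' : List (B × Bool)} (h : Red L L') {o : Option (Fin 5)} {w : Fin 5}
    (hr : run α β L o = some w) : run α β L' o = some w := by
  induction h with
  | refl => exact hr
  | tail _ hstep ih => exact run_redstep hstep ih

lemma run_toWord_mk {L : List (B × Bool)} {o : Option (Fin 5)} {w : Fin 5}
    (hr : run α β L o = some w) : run α β (toWord (mk L)) o = some w := by
  rw [toWord_mk]
  exact run_red reduce.red hr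

lemma run_invRev : ∀ {L : List (B × Bool)} {v w : Fin 5},
    run α β L (some v) = some w → run α β (invRev L) (some w) = some v := by
  intro L
  induction L with
  | nil =>
    intro v w h
    rw [run_nil] at h
    rw [invRev_nil, run_nil]
    exact (Option.some_inj.mp h) ▸ rfl
  | cons x L ih =>
    intro v w h
    rw [run_cons, Option.bind_some] at h
    cases hs : stp α β x v with
    | none => rw [hs, run_none] at h; exact absurd h (by simp)
    | some s =>
      rw [hs] at h
      rw [SG2.invRev_cons, run_append, ih h, run_cons, Option.bind_some, stp_inv hs, run_nil]

variable (α β) in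
/-- the subgroup of loops at the base vertex -/
def TT : Subgroup (FreeGroup B) where
  carrier := {w | run α β w.toWord (some 0) = some 0}
  one_mem' := by simp [toWord_one, run_nil]
  mul_mem' := by
    intro a b ha hb
    simp only [Set.mem_setOf_eq] at *
    have : a * b = mk (a.toWord ++ b.toWord) := by rw [← mul_mk, mk_toWord, mk_toWord]
    rw [this]
    apply run_toWord_mk
    rw [run_append, ha, hb]
  inv_mem' := by
    intro a ha
    simp only [Set.mem_setOf_eq] at *
    have : a⁻¹ = mk (invRev a.toWord) := by rw [← inv_mk, mk_toWord]
    rw [this]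
    exact run_toWord_mk (run_invRev ha)

lemma mem_TT {w : FreeGroup B} : w ∈ TT α β ↔ run α β w.toWord (some 0) = some 0 := Iff.rfl

/-- the partial map of a word -/
def mapC' (α β : B) (C : List (B × Bool)) : Fin 5 → Option (Fin 5) := fun v => run α β C (some v)

lemma run_eq_bind (C : List (B × Bool)) (o : Option (Fin 5)) :
    run α β C o = o.bind (mapC' α β C) := by
  cases o with
  | none => rw [run_none]; rfl
  | some v => rfl

variable (α β)

lemma encM_mapC_mem : ∀ C : List (B × Bool), encM (mapC' α β C) ∈ certN := by
  intro C
  induction C using List.reverseRecOn with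
  | nil =>
    have : encM (mapC' α β ([] : List (B × Bool))) = 5910 := rfl
    rw [this]
    decide
  | append_singleton C y ih =>
    have he : mapC' α β (C ++ [y]) = fun v => (mapC' α β C v).bind (cstep (codeF α β y)) := by
      funext v
      show run α β (C ++ [y]) (some v) = _
      rw [run_append, run_cons, run_nil, run_eq_bind]
      rfl
    rw [he, ← compN_encM]
    exact mem_compN ih (codeF α β y).isLt

variable {α β}

lemma run_powList (C : List (B × Bool)) : ∀ (n : ℕ) (o : Option (Fin 5)),
    run α β (powList C n) o = (fun o => run α β C o)^[n] o := by
  intro n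
  induction n with
  | zero => intro o; rfl
  | succ n ih =>
    intro o
    rw [powList, run_append, ih, Function.iterate_succ_apply]

lemma cyc_fix_sem {C : List (B × Bool)} {q : Fin 5} {k : ℕ} (hk1 : 1 ≤ k) (hk5 : k ≤ 5)
    (hit : (fun o => run α β C o)^[k] (some q) = some q) : run α β C (some q) = some q := by
  have hF : (fun o => run α β C o) = (fun o => o.bind (mapC' α β C)) := by
    funext o; exact run_eq_bind C o
  rw [hF] at hit
  have hb := iterN_encM (mapC' α β C) k (some q)
  rw [hit] at hb
  have hq : encL (some q) = q.val := rfl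
  rw [hq] at hb
  have hd : digitN (encM (mapC' α β C)) q.val = q.val :=
    cyc_fix (encM_mapC_mem α β C) q.isLt hk1 hk5 hb
  rw [digit_encM] at hd
  show mapC' α β C q = some q
  cases ho : mapC' α β C q with
  | none =>
    rw [ho] at hd
    have : (5 : ℕ) = q.val := hd
    have := q.isLt
    omega
  | some w =>
    rw [ho] at hd
    have : w = q := Fin.ext hd
    rw [this]

/-- pigeonhole: a periodic point of a partial injection on 5 points has period ≤ 5 -/
lemma pigeon {F : Option (Fin 5) → Option (Fin 5)} (hnone : F none = none)
    (hinj : ∀ o o' w, F o = some w → F o' = some w → o = o')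
    {q : Fin 5} {n : ℕ} (hn : 1 ≤ n) (h : F^[n] (some q) = some q) :
    ∃ k, 1 ≤ k ∧ k ≤ 5 ∧ F^[k] (some q) = some q := by
  have hnone_iter : ∀ m, F^[m] none = none := by
    intro m
    induction m with
    | zero => rfl
    | succ m ih => rw [Function.iterate_succ_apply, hnone, ih]
  have hdef : ∀ j, j ≤ n → F^[j] (some q) ≠ none := by
    intro j hj hcon
    have : F^[n] (some q) = none := by
      have := Function.iterate_add_apply F (n - j) j (some q)
      rw [Nat.sub_add_cancel hj] at this
      rw [this, hcon, hnone_iter]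
    rw [h] at this
    exact absurd this (by simp)
  have hdesc : ∀ i j, i < j → j ≤ n → F^[i] (some q) = F^[j] (some q) →
      F^[j - i] (some q) = some q := by
    intro i
    induction i with
    | zero =>
      intro j _ _ hov
      simpa using hov.symm
    | succ i ih =>
      intro j hij hjn hov
      cases j with
      | zero => omega
      | succ j' =>
        rw [Function.iterate_succ_apply', Function.iterate_succ_apply'] at hov
        cases hw : F (F^[i] (some q)) with
        | none =>
          exfalso
          apply hdef (i+1) (by omega)
          rw [Function.iterate_succ_apply', hw]
        | some wv =>
          have h2 : F (F^[j'] (some q)) = some wv := by rw [← hov, hw]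
          have heq := hinj _ _ _ hw h2
          have hres := ih j' (by omega) (by omega) heq
          simpa [Nat.succ_sub_succ] using hres
  by_cases hn5 : n ≤ 5
  · exact ⟨n, hn, hn5, h⟩
  · push_neg at hn5
    have hisSome : ∀ j : Fin 6, (F^[(j : ℕ)] (some q)).isSome := by
      intro j
      rw [← Option.ne_none_iff_isSome]
      exact hdef j (by omega)
    let g : Fin 6 → Fin 5 := fun j => (F^[(j : ℕ)] (some q)).get (hisSome j)
    obtain ⟨i, j, hne, hgeq⟩ := Fintype.exists_ne_map_eq_of_card_lt g (by simp)
    have hov : F^[(i : ℕ)] (some q) = F^[(j : ℕ)] (some q) := by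
      have hgeq' : some (g i) = some (g j) := congrArg some hgeq
      rw [show some (g i) = F^[(i:ℕ)] (some q) from Option.some_get _,
        show some (g j) = F^[(j:ℕ)] (some q) from Option.some_get _] at hgeq'
      exact hgeq'
    rcases Ne.lt_or_gt hne with hij | hij
    · have hk := hdesc i j (by exact_mod_cast hij) (by omega) hov
      exact ⟨(j : ℕ) - (i : ℕ), by omega, by omega, hk⟩
    · have hk := hdesc j i (by exact_mod_cast hij) (by omega) hov.symm
      exact ⟨(i : ℕ) - (j : ℕ), by omega, by omega, hk⟩

end Auto

end SG3
namespace SG4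
open FreeGroup List SG SG2 SG3

section RC
variable {B : Type} [DecidableEq B] {α β : B}

lemma rootClosed_TT (t : FreeGroup B) (n : ℕ) (hn : 1 ≤ n) (htn : t ^ n ∈ TT α β) :
    t ∈ TT α β := by
  obtain ⟨P, C, hLe, hcyc⟩ :=
    cyclic_decomp (toWord t).length (toWord t) le_rfl (chain'_toWord t)
  have htP : t = mk P * mk C * (mk P)⁻¹ := by
    conv_lhs => rw [← mk_toWord (x := t), hLe]
    rw [← mul_mk, ← mul_mk, inv_mk, mul_assoc]
  by_cases hC : C = []
  · subst hC
    have ht1 : t = 1 := by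
      rw [htP, show mk ([] : List (B × Bool)) = 1 from rfl, mul_one, mul_inv_cancel]
    rw [ht1]
    exact one_mem _
  · -- C nonempty
    have hcycO : ∀ a ∈ C.getLast?, ∀ b ∈ C.head?, nc a b := by
      intro a ha b hb
      cases C with
      | nil => exact absurd rfl hC
      | cons c0 ct =>
        simp only [List.head?_cons, Option.mem_some_iff] at hb
        rw [List.getLast?_eq_getLast_of_ne_nil hC, Option.mem_some_iff] at ha
        subst ha; subst hb
        exact hcyc hC
    have hchL : List.Chain' nc (P ++ (C ++ invRev P)) := hLe ▸ chain'_toWord t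
    have hch : List.Chain' nc (P ++ (powList C n ++ invRev P)) :=
      chain'_conj_pow hchL hC hcycO hn
    have hpow : t ^ n = mk (P ++ (powList C n ++ invRev P)) := by
      rw [htP, conj_pow, ← mk_powList, ← mul_mk, ← mul_mk, inv_mk, mul_assoc]
    have htw : (t ^ n).toWord = P ++ (powList C n ++ invRev P) := by
      rw [hpow, toWord_mk, reduce_eq_self_of_chain hch]
    rw [mem_TT, htw, run_append] at htn
    cases hq : run α β P (some 0) with
    | none => rw [hq, run_none] at htn; exact absurd htn (by simp)
    | some q =>
      rw [hq, run_append] at htn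
      cases hr : run α β (powList C n) (some q) with
      | none => rw [hr, run_none] at htn; exact absurd htn (by simp)
      | some r =>
        rw [hr] at htn
        -- htn : run (invRev P) (some r) = some 0
        have hrq : r = q := by
          have h1 : run α β (invRev (invRev P)) (some 0) = some r := run_invRev htn
          rw [invRev_invRev] at h1
          rw [h1] at hq
          exact (Option.some_inj.mp hq)
        rw [hrq] at hr
        -- loop of powList C n at q
        have hiter : (fun o => run α β C o)^[n] (some q) = some q := by
          rw [← run_powList]; exact hr
        have hinj : ∀ o o' (w : Fin 5), run α β C o = some w → run α β C o' = some w →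
            o = o' := by
          intro o o' w h1 h2
          cases o with
          | none => rw [run_none] at h1; exact absurd h1 (by simp)
          | some v =>
            cases o' with
            | none => rw [run_none] at h2; exact absurd h2 (by simp)
            | some v' =>
              have i1 := run_invRev h1
              have i2 := run_invRev h2
              rw [i1] at i2
              exact congrArg some (Option.some_inj.mp i2)
        obtain ⟨k, hk1, hk5, hkfix⟩ := pigeon (run_none C) hinj hn hiter
        have hCq : run α β C (some q) = some q := cyc_fix_sem hk1 hk5 hkfix
        rw [mem_TT, hLe, run_append, hq, run_append, hCq]
        exact run_invRev hq

end RC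

end SG4
namespace SG5
open FreeGroup List SG SG2 SG3 SG4

section
variable {B : Type} [DecidableEq B] (α β : B)

def uu : FreeGroup B := of α * of α * (of β)⁻¹
def vv : FreeGroup B := of β * of β * of α * of β

def Lu : List (B × Bool) := [(α,true),(α,true),(β,false)]
def Lv : List (B × Bool) := [(β,true),(β,true),(α,true),(β,true)]

lemma mk_Lu : mk (Lu α β) = uu α β := by
  rw [uu, ← mk_single_true α, ← mk_single_false β, mul_mk, mul_mk]
  rfl

lemma mk_Lv : mk (Lv α β) = vv α β := by
  rw [vv, ← mk_single_true α, ← mk_single_true β, mul_mk, mul_mk, mul_mk]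
  rfl

def pth : Fin 5 → FreeGroup B :=
  ![1, of α, of α * of α, of α * of α * of β * of α, of α * of α * of β]

variable {α β}

lemma codeF_αt (hαβ : α ≠ β) : codeF α β (α, true) = 0 := by simp [codeF]
lemma codeF_αf (hαβ : α ≠ β) : codeF α β (α, false) = 1 := by simp [codeF]
lemma codeF_βt (hαβ : α ≠ β) : codeF α β (β, true) = 2 := by simp [codeF, Ne.symm hαβ]
lemma codeF_βf (hαβ : α ≠ β) : codeF α β (β, false) = 3 := by simp [codeF, Ne.symm hαβ]

lemma uu_mem_TT (hαβ : α ≠ β) : uu α β ∈ TT α β := by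
  rw [mem_TT, ← mk_Lu]
  apply run_toWord_mk
  show run α β (Lu α β) (some 0) = some 0
  simp only [Lu, run, List.foldl_cons, List.foldl_nil, stp, codeF_αt hαβ, codeF_βf hαβ]
  decide

lemma vv_mem_TT (hαβ : α ≠ β) : vv α β ∈ TT α β := by
  rw [mem_TT, ← mk_Lv]
  apply run_toWord_mk
  show run α β (Lv α β) (some 0) = some 0
  simp only [Lv, run, List.foldl_cons, List.foldl_nil, stp, codeF_αt hαβ, codeF_βt hαβ]
  decide

lemma mem_uu (hαβ : α ≠ β) : uu α β ∈ Subgroup.closure {uu α β, vv α β} :=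
  Subgroup.subset_closure (by simp)

lemma mem_vv (hαβ : α ≠ β) : vv α β ∈ Subgroup.closure {uu α β, vv α β} :=
  Subgroup.subset_closure (by simp)

lemma edge_mem (hαβ : α ≠ β) (x : B × Bool) (q s : Fin 5) (hs : stp α β x q = some s) :
    pth α β q * mk [x] * (pth α β s)⁻¹ ∈ Subgroup.closure {uu α β, vv α β} := by
  rcases x with ⟨c, t⟩
  by_cases h1 : c = α
  · rw [h1] at hs ⊢
    cases t
    · -- letter a⁻¹ : 1→0, 2→1, 3→4
      rw [stp, codeF_αf hαβ] at hs
      rw [mk_single_false]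
      fin_cases q
      · exact absurd (show (none : Option (Fin 5)) = some s from hs) (by simp)
      · obtain rfl : s = 0 := by
          have hs' : some (0 : Fin 5) = some s := hs
          exact (Option.some_inj.mp hs').symm
        have h : pth α β 1 * (of α)⁻¹ * (pth α β 0)⁻¹ = 1 := by
          show of α * (of α)⁻¹ * (1:FreeGroup B)⁻¹ = 1; group
        rw [show ((⟨1, by omega⟩ : Fin 5)) = 1 from rfl, h]; exact one_mem _
      · obtain rfl : s = 1 := by
          have hs' : some (1 : Fin 5) = some s := hs
          exact (Option.some_inj.mp hs').symm
        have h : pth α β 2 * (of α)⁻¹ * (pth α β 1)⁻¹ = 1 := by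
          show of α * of α * (of α)⁻¹ * (of α)⁻¹ = 1; group
        rw [show ((⟨2, by omega⟩ : Fin 5)) = 2 from rfl, h]; exact one_mem _
      · obtain rfl : s = 4 := by
          have hs' : some (4 : Fin 5) = some s := hs
          exact (Option.some_inj.mp hs').symm
        have h : pth α β 3 * (of α)⁻¹ * (pth α β 4)⁻¹ = 1 := by
          show of α * of α * of β * of α * (of α)⁻¹ * (of α * of α * of β)⁻¹ = 1; group
        rw [show ((⟨3, by omega⟩ : Fin 5)) = 3 from rfl, h]; exact one_mem _
      · exact absurd (show (none : Option (Fin 5)) = some s from hs) (by simp)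
    · -- letter a : 0→1, 1→2, 4→3
      rw [stp, codeF_αt hαβ] at hs
      rw [mk_single_true]
      fin_cases q
      · obtain rfl : s = 1 := by
          have hs' : some (1 : Fin 5) = some s := hs
          exact (Option.some_inj.mp hs').symm
        have h : pth α β 0 * of α * (pth α β 1)⁻¹ = 1 := by
          show (1:FreeGroup B) * of α * (of α)⁻¹ = 1; group
        rw [show ((⟨0, by omega⟩ : Fin 5)) = 0 from rfl, h]; exact one_mem _
      · obtain rfl : s = 2 := by
          have hs' : some (2 : Fin 5) = some s := hs
          exact (Option.some_inj.mp hs').symm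
        have h : pth α β 1 * of α * (pth α β 2)⁻¹ = 1 := by
          show of α * of α * (of α * of α)⁻¹ = 1; group
        rw [show ((⟨1, by omega⟩ : Fin 5)) = 1 from rfl, h]; exact one_mem _
      · exact absurd (show (none : Option (Fin 5)) = some s from hs) (by simp)
      · exact absurd (show (none : Option (Fin 5)) = some s from hs) (by simp)
      · obtain rfl : s = 3 := by
          have hs' : some (3 : Fin 5) = some s := hs
          exact (Option.some_inj.mp hs').symm
        have h : pth α β 4 * of α * (pth α β 3)⁻¹ = 1 := by
          show of α * of α * of β * of α * (of α * of α * of β * of α)⁻¹ = 1; group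
        rw [show ((⟨4, by omega⟩ : Fin 5)) = 4 from rfl, h]; exact one_mem _
  · by_cases h2 : c = β
    · rw [h2] at hs ⊢
      cases t
      · -- letter b⁻¹ : 0→3, 2→0, 4→2
        rw [stp, codeF_βf hαβ] at hs
        rw [mk_single_false]
        fin_cases q
        · obtain rfl : s = 3 := by
            have hs' : some (3 : Fin 5) = some s := hs
            exact (Option.some_inj.mp hs').symm
          have h : pth α β 0 * (of β)⁻¹ * (pth α β 3)⁻¹ = (uu α β * vv α β)⁻¹ := by
            show (1:FreeGroup B) * (of β)⁻¹ * (of α * of α * of β * of α)⁻¹ = _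
            rw [uu, vv]; group
          rw [show ((⟨0, by omega⟩ : Fin 5)) = 0 from rfl, h]
          exact inv_mem (mul_mem (mem_uu hαβ) (mem_vv hαβ))
        · exact absurd (show (none : Option (Fin 5)) = some s from hs) (by simp)
        · obtain rfl : s = 0 := by
            have hs' : some (0 : Fin 5) = some s := hs
            exact (Option.some_inj.mp hs').symm
          have h : pth α β 2 * (of β)⁻¹ * (pth α β 0)⁻¹ = uu α β := by
            show of α * of α * (of β)⁻¹ * (1:FreeGroup B)⁻¹ = _
            rw [uu]; group
          rw [show ((⟨2, by omega⟩ : Fin 5)) = 2 from rfl, h]; exact mem_uu hαβ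
        · exact absurd (show (none : Option (Fin 5)) = some s from hs) (by simp)
        · obtain rfl : s = 2 := by
            have hs' : some (2 : Fin 5) = some s := hs
            exact (Option.some_inj.mp hs').symm
          have h : pth α β 4 * (of β)⁻¹ * (pth α β 2)⁻¹ = 1 := by
            show of α * of α * of β * (of β)⁻¹ * (of α * of α)⁻¹ = 1; group
          rw [show ((⟨4, by omega⟩ : Fin 5)) = 4 from rfl, h]; exact one_mem _
      · -- letter b : 0→2, 2→4, 3→0
        rw [stp, codeF_βt hαβ] at hs
        rw [mk_single_true]
        fin_cases q
        · obtain rfl : s = 2 := by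
            have hs' : some (2 : Fin 5) = some s := hs
            exact (Option.some_inj.mp hs').symm
          have h : pth α β 0 * of β * (pth α β 2)⁻¹ = (uu α β)⁻¹ := by
            show (1:FreeGroup B) * of β * (of α * of α)⁻¹ = _
            rw [uu]; group
          rw [show ((⟨0, by omega⟩ : Fin 5)) = 0 from rfl, h]; exact inv_mem (mem_uu hαβ)
        · exact absurd (show (none : Option (Fin 5)) = some s from hs) (by simp)
        · obtain rfl : s = 4 := by
            have hs' : some (4 : Fin 5) = some s := hs
            exact (Option.some_inj.mp hs').symm
          have h : pth α β 2 * of β * (pth α β 4)⁻¹ = 1 := by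
            show of α * of α * of β * (of α * of α * of β)⁻¹ = 1; group
          rw [show ((⟨2, by omega⟩ : Fin 5)) = 2 from rfl, h]; exact one_mem _
        · obtain rfl : s = 0 := by
            have hs' : some (0 : Fin 5) = some s := hs
            exact (Option.some_inj.mp hs').symm
          have h : pth α β 3 * of β * (pth α β 0)⁻¹ = uu α β * vv α β := by
            show of α * of α * of β * of α * of β * (1:FreeGroup B)⁻¹ = _
            rw [uu, vv]; group
          rw [show ((⟨3, by omega⟩ : Fin 5)) = 3 from rfl, h]
          exact mul_mem (mem_uu hαβ) (mem_vv hαβ)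
        · exact absurd (show (none : Option (Fin 5)) = some s from hs) (by simp)
    · -- foreign letter
      exfalso
      have hc : codeF α β (c, t) = 4 := by simp [codeF, h1, h2]
      rw [stp, hc] at hs
      fin_cases q <;>
        exact absurd (show (none : Option (Fin 5)) = some s from hs) (by simp)

lemma tel (hαβ : α ≠ β) : ∀ (L : List (B × Bool)) (q r : Fin 5),
    run α β L (some q) = some r →
    pth α β q * mk L * (pth α β r)⁻¹ ∈ Subgroup.closure {uu α β, vv α β} := by
  intro L
  induction L with
  | nil =>
    intro q r h
    rw [run_nil] at h
    obtain rfl : q = r := Option.some_inj.mp h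
    have : pth α β q * mk [] * (pth α β q)⁻¹ = 1 := by
      rw [show mk ([] : List (B × Bool)) = 1 from rfl]; group
    rw [this]; exact one_mem _
  | cons x L ih =>
    intro q r h
    rw [run_cons, Option.bind_some] at h
    cases hs : stp α β x q with
    | none => rw [hs, run_none] at h; exact absurd h (by simp)
    | some s =>
      rw [hs] at h
      have h1 := edge_mem hαβ x q s hs
      have h2 := ih s r h
      have heq : (pth α β q * mk [x] * (pth α β s)⁻¹) * (pth α β s * mk L * (pth α β r)⁻¹)
          = pth α β q * mk (x :: L) * (pth α β r)⁻¹ := by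
        rw [show (x :: L) = [x] ++ L from rfl, ← mul_mk]; group
      rw [← heq]
      exact mul_mem h1 h2

lemma TT_eq_closure (hαβ : α ≠ β) : TT α β = Subgroup.closure {uu α β, vv α β} := by
  apply _root_.le_antisymm
  · intro w hw
    have h := tel hαβ w.toWord 0 0 hw
    rw [mk_toWord] at h
    have hp : pth α β (0 : Fin 5) = 1 := rfl
    rwa [hp, one_mul, inv_one, mul_one] at h
  · rw [Subgroup.closure_le]
    rintro w hw
    rcases hw with rfl | rfl
    · exact uu_mem_TT hαβ
    · exact vv_mem_TT hαβ

end

end SG5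
namespace SG6
open FreeGroup List SG SG2 SG3 SG4 SG5

section
variable {B : Type} [DecidableEq B] {α β : B}

abbrev AA : Type := Fin 1 × Bool

variable (α β) in
def fgen : AA → FreeGroup B := fun p => if p.2 then uu α β else vv α β

variable (α β) in
def hh : FreeGroup AA →* FreeGroup B := FreeGroup.lift (fgen α β)

variable (α β) in
def ImW : AA × Bool → List (B × Bool) := fun g =>
  if g.1.2 then (if g.2 then Lu α β else [(β,true),(α,false),(α,false)])
  else (if g.2 then Lv α β else [(β,false),(α,false),(β,false),(β,false)])

variable (α β) in
def t2 : AA × Bool → (B × Bool) × (B × Bool) := fun g =>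
  if g.1.2 then (if g.2 then ((α,true),(β,false)) else ((α,false),(α,false)))
  else (if g.2 then ((α,true),(β,true)) else ((β,false),(β,false)))

lemma nc_of_ne {c d : B} (h : c ≠ d) (s s' : Bool) : nc (c,s) (d,s') :=
  fun hh => h hh.1

lemma nc_same_sign (c d : B) (s : Bool) : nc (c,s) (d,s) :=
  fun hh => by simpa using hh.2

lemma chainLu (hαβ : α ≠ β) : Chain' nc (Lu α β) :=
  List.isChain_cons_cons.mpr ⟨nc_same_sign _ _ _,
    List.isChain_cons_cons.mpr ⟨nc_of_ne hαβ _ _, List.isChain_singleton _⟩⟩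

lemma chainLui (hαβ : α ≠ β) : Chain' nc ([(β,true),(α,false),(α,false)] : List (B × Bool)) :=
  List.isChain_cons_cons.mpr ⟨nc_of_ne (Ne.symm hαβ) _ _,
    List.isChain_cons_cons.mpr ⟨nc_same_sign _ _ _, List.isChain_singleton _⟩⟩

lemma chainLv (hαβ : α ≠ β) : Chain' nc (Lv α β) :=
  List.isChain_cons_cons.mpr ⟨nc_same_sign _ _ _,
    List.isChain_cons_cons.mpr ⟨nc_of_ne (Ne.symm hαβ) _ _,
      List.isChain_cons_cons.mpr ⟨nc_of_ne hαβ _ _, List.isChain_singleton _⟩⟩⟩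

lemma chainLvi (hαβ : α ≠ β) :
    Chain' nc ([(β,false),(α,false),(β,false),(β,false)] : List (B × Bool)) :=
  List.isChain_cons_cons.mpr ⟨nc_of_ne (Ne.symm hαβ) _ _,
    List.isChain_cons_cons.mpr ⟨nc_of_ne hαβ _ _,
      List.isChain_cons_cons.mpr ⟨nc_same_sign _ _ _, List.isChain_singleton _⟩⟩⟩

lemma chainLvTail (hαβ : α ≠ β) : Chain' nc ([(β,true),(α,true),(β,true)] : List (B × Bool)) :=
  List.isChain_cons_cons.mpr ⟨nc_of_ne (Ne.symm hαβ) _ _,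
    List.isChain_cons_cons.mpr ⟨nc_of_ne hαβ _ _, List.isChain_singleton _⟩⟩

lemma chainLuiTail : Chain' nc ([(α,false),(α,false)] : List (B × Bool)) :=
  List.isChain_cons_cons.mpr ⟨nc_same_sign _ _ _, List.isChain_singleton _⟩

lemma head?_junc' {m0 l : B × Bool} (h : nc l m0) (M : List (B × Bool))
    (hM : M.head? = some m0) : ∀ m ∈ M.head?, nc l m := by
  intro m hm
  rw [hM, Option.mem_some_iff] at hm
  exact hm ▸ h

lemma im_single (g : AA × Bool) : hh α β (mk [g]) = mk (ImW α β g) := by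
  rcases g with ⟨p, s⟩
  cases s
  · rw [mk_single_false, MonoidHom.map_inv,
      show hh α β (of p) = fgen α β p from FreeGroup.lift_apply_of]
    rcases p with ⟨i, b⟩
    cases b
    · show (vv α β)⁻¹ = _
      rw [← mk_Lv, inv_mk]
      rfl
    · show (uu α β)⁻¹ = _
      rw [← mk_Lu, inv_mk]
      rfl
  · rw [mk_single_true, show hh α β (of p) = fgen α β p from FreeGroup.lift_apply_of]
    rcases p with ⟨i, b⟩
    cases b
    · show vv α β = _
      rw [← mk_Lv]
      rfl
    · show uu α β = _
      rw [← mk_Lu]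
      rfl

lemma step_nocancel {w : FreeGroup B} {X : List (B × Bool)} {l₁ l₂ : B × Bool}
    (hX : w.toWord = X ++ [l₁, l₂]) {M : List (B × Bool)} (hM : Chain' nc M)
    (hjunc : ∀ m ∈ M.head?, nc l₂ m) :
    (w * mk M).toWord = (X ++ [l₁, l₂]) ++ M := by
  have h1 : w * mk M = mk ((X ++ [l₁, l₂]) ++ M) := by
    conv_lhs => rw [← mk_toWord (x := w), hX]
    rw [mul_mk]
  rw [h1, toWord_mk, reduce_eq_self_of_chain]
  refine List.IsChain.append ?_ hM ?_
  · rw [← hX]; exact chain'_toWord w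
  · intro a ha b hb
    have hgl : (X ++ [l₁, l₂]).getLast? = some l₂ := by
      rw [show X ++ [l₁, l₂] = (X ++ [l₁]) ++ [l₂] from by simp]
      exact List.getLast?_concat
    rw [hgl, Option.mem_some_iff] at ha
    exact ha ▸ hjunc b hb

lemma step_cancel {w : FreeGroup B} {X : List (B × Bool)} {l₁ : B × Bool}
    {c : B} (hX : w.toWord = X ++ [l₁, (c, false)]) {M : List (B × Bool)} (hM : Chain' nc M)
    (hjunc : ∀ m ∈ M.head?, nc l₁ m) :
    (w * mk ((c, true) :: M)).toWord = (X ++ [l₁]) ++ M := by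
  have h1 : w * mk ((c, true) :: M) = mk ((X ++ [l₁]) ++ M) := by
    have hw : w = mk (X ++ [l₁]) * (of c)⁻¹ := by
      rw [← mk_toWord (x := w), hX, ← mk_single_false, mul_mk]
      congr 1
      simp
    have hm : mk ((c, true) :: M) = of c * mk M := by
      rw [← mk_single_true, mul_mk]
      rfl
    rw [hw, hm, ← mul_mk (L₁ := X ++ [l₁]) (L₂ := M)]
    group
  rw [h1, toWord_mk, reduce_eq_self_of_chain]
  refine List.IsChain.append ?_ hM ?_
  · have hc : Chain' nc (X ++ [l₁, (c, false)]) := hX ▸ chain'_toWord w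
    exact List.IsChain.prefix hc ⟨[(c, false)], by simp⟩
  · intro a ha b hb
    rw [List.getLast?_concat, Option.mem_some_iff] at ha
    exact ha ▸ hjunc b hb

lemma inj_main (hαβ : α ≠ β) : ∀ (D : List (AA × Bool)) (g : AA × Bool),
    Chain' nc (D ++ [g]) →
    ∃ X, (hh α β (mk (D ++ [g]))).toWord = X ++ [(t2 α β g).1, (t2 α β g).2] := by
  intro D
  induction D using List.reverseRecOn with
  | nil =>
    intro g _
    have h1 : hh α β (mk ([] ++ [g])) = mk (ImW α β g) := im_single g
    rw [h1]
    rcases g with ⟨⟨i, b⟩, s⟩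
    cases b <;> cases s
    · -- y⁻¹
      refine ⟨[(β,false),(α,false)], ?_⟩
      rw [toWord_mk, reduce_eq_self_of_chain (by exact chainLvi hαβ)]
      rfl
    · -- y
      refine ⟨[(β,true),(β,true)], ?_⟩
      rw [toWord_mk, reduce_eq_self_of_chain (by exact chainLv hαβ)]
      rfl
    · -- x⁻¹
      refine ⟨[(β,true)], ?_⟩
      rw [toWord_mk, reduce_eq_self_of_chain (by exact chainLui hαβ)]
      rfl
    · -- x
      refine ⟨[(α,true)], ?_⟩
      rw [toWord_mk, reduce_eq_self_of_chain (by exact chainLu hαβ)]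
      rfl
  | append_singleton D' g' ih =>
    intro g hch
    have hch' : Chain' nc (D' ++ [g']) := List.IsChain.prefix hch ⟨[g], by simp⟩
    have hj : nc g' g := by
      have h3 := (List.isChain_append.mp hch).2.2
      refine h3 g' ?_ g rfl
      rw [List.getLast?_concat]
      rfl
    obtain ⟨X, hX⟩ := ih g' hch'
    have hmul : hh α β (mk ((D' ++ [g']) ++ [g]))
        = hh α β (mk (D' ++ [g'])) * mk (ImW α β g) := by
      rw [← mul_mk, MonoidHom.map_mul, im_single]
    rcases g' with ⟨⟨i', b'⟩, s'⟩
    rcases g with ⟨⟨i, b⟩, s⟩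
    cases b' <;> cases s' <;> cases b <;> cases s <;>
      simp only [t2, ImW, if_true, if_false, Bool.false_eq_true, ite_true, ite_false] at hX hmul ⊢
    -- 16 cases in order (b',s',b,s) with false < true
    · -- g' = y⁻¹ (l₂=(β,f)) , g = y⁻¹ : M = Lvi, no cancel
      refine ⟨(X ++ [(β,false),(β,false)]) ++ [(β,false),(α,false)], ?_⟩
      rw [hmul, step_nocancel hX (chainLvi hαβ) (head?_junc' (nc_same_sign β β false) _ rfl)]
      simp
    · -- g' = y⁻¹, g = y : forbidden
      exact absurd ⟨Prod.ext (Subsingleton.elim _ _) rfl, rfl⟩ hj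
    · -- g' = y⁻¹, g = x⁻¹ : cancel case
      refine ⟨(X ++ [(β,false)]) ++ [], ?_⟩
      rw [hmul, step_cancel hX chainLuiTail (head?_junc' (nc_of_ne (Ne.symm hαβ) _ _) _ rfl)]
      simp
    · -- g' = y⁻¹, g = x : M = Lu, no cancel
      refine ⟨(X ++ [(β,false),(β,false)]) ++ [(α,true)], ?_⟩
      rw [hmul, step_nocancel hX (chainLu hαβ) (head?_junc' (nc_of_ne (Ne.symm hαβ) _ _) _ rfl)]
      simp [Lu]
    · -- g' = y, g = y⁻¹ : forbidden
      exact absurd ⟨Prod.ext (Subsingleton.elim _ _) rfl, rfl⟩ hj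
    · -- g' = y, g = y : M = Lv, no cancel
      refine ⟨(X ++ [(α,true),(β,true)]) ++ [(β,true),(β,true)], ?_⟩
      rw [hmul, step_nocancel hX (chainLv hαβ) (head?_junc' (nc_same_sign β β true) _ rfl)]
      simp [Lv]
    · -- g' = y, g = x⁻¹ : M = Lui, no cancel
      refine ⟨(X ++ [(α,true),(β,true)]) ++ [(β,true)], ?_⟩
      rw [hmul, step_nocancel hX (chainLui hαβ) (head?_junc' (nc_same_sign β β true) _ rfl)]
      simp
    · -- g' = y, g = x : M = Lu, no cancel
      refine ⟨(X ++ [(α,true),(β,true)]) ++ [(α,true)], ?_⟩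
      rw [hmul, step_nocancel hX (chainLu hαβ) (head?_junc' (nc_of_ne (Ne.symm hαβ) _ _) _ rfl)]
      simp [Lu]
    · -- g' = x⁻¹ (l₂=(α,f)), g = y⁻¹ : M = Lvi, no cancel
      refine ⟨(X ++ [(α,false),(α,false)]) ++ [(β,false),(α,false)], ?_⟩
      rw [hmul, step_nocancel hX (chainLvi hαβ) (head?_junc' (nc_of_ne hαβ _ _) _ rfl)]
      simp
    · -- g' = x⁻¹, g = y : M = Lv, no cancel
      refine ⟨(X ++ [(α,false),(α,false)]) ++ [(β,true),(β,true)], ?_⟩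
      rw [hmul, step_nocancel hX (chainLv hαβ) (head?_junc' (nc_of_ne hαβ _ _) _ rfl)]
      simp [Lv]
    · -- g' = x⁻¹, g = x⁻¹ : M = Lui, no cancel
      refine ⟨(X ++ [(α,false),(α,false)]) ++ [(β,true)], ?_⟩
      rw [hmul, step_nocancel hX (chainLui hαβ) (head?_junc' (nc_of_ne hαβ _ _) _ rfl)]
      simp
    · -- g' = x⁻¹, g = x : forbidden
      exact absurd ⟨Prod.ext (Subsingleton.elim _ _) rfl, rfl⟩ hj
    · -- g' = x (l₂=(β,f)), g = y⁻¹ : M = Lvi, no cancel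
      refine ⟨(X ++ [(α,true),(β,false)]) ++ [(β,false),(α,false)], ?_⟩
      rw [hmul, step_nocancel hX (chainLvi hαβ) (head?_junc' (nc_same_sign β β false) _ rfl)]
      simp
    · -- g' = x, g = y : cancel case
      refine ⟨(X ++ [(α,true)]) ++ [(β,true)], ?_⟩
      rw [show Lv α β = (β,true) :: [(β,true),(α,true),(β,true)] from rfl] at hmul
      rw [hmul, step_cancel hX (chainLvTail hαβ) (head?_junc' (nc_of_ne hαβ _ _) _ rfl)]
      simp
    · -- g' = x, g = x⁻¹ : forbidden
      exact absurd ⟨Prod.ext (Subsingleton.elim _ _) rfl, rfl⟩ hj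
    · -- g' = x, g = x : M = Lu, no cancel
      refine ⟨(X ++ [(α,true),(β,false)]) ++ [(α,true)], ?_⟩
      rw [hmul, step_nocancel hX (chainLu hαβ) (head?_junc' (nc_of_ne (Ne.symm hαβ) _ _) _ rfl)]
      simp [Lu]

lemma hh_injective (hαβ : α ≠ β) : Function.Injective (hh α β) := by
  rw [injective_iff_map_eq_one]
  intro w hw
  by_contra hne
  have hWne : w.toWord ≠ [] := fun h => hne (toWord_eq_nil_iff.mp h)
  obtain ⟨D, g, hDg⟩ : ∃ D g, w.toWord = D ++ [g] := by
    rcases List.eq_nil_or_concat w.toWord with h | ⟨D, g, h⟩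
    · exact absurd h hWne
    · exact ⟨D, g, by simpa [List.concat_eq_append] using h⟩
  have hch : Chain' nc (D ++ [g]) := hDg ▸ chain'_toWord w
  obtain ⟨X, hX⟩ := inj_main hαβ D g hch
  rw [show mk (D ++ [g]) = w from by rw [← hDg, mk_toWord], hw, toWord_one] at hX
  exact absurd hX.symm (by simp)

end

end SG6
namespace SG7
open FreeGroup SG SG2 SG3 SG4 SG5 SG6

section
variable {B : Type} [DecidableEq B] {α β : B}

variable (α β) in
def swapB : B → B := fun c => if c = α then β else if c = β then α else c

lemma swapB_α (hαβ : α ≠ β) : swapB α β α = β := by simp [swapB]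

lemma swapB_β (hαβ : α ≠ β) : swapB α β β = α := by simp [swapB, Ne.symm hαβ]

lemma swapB_invol (hαβ : α ≠ β) (c : B) : swapB α β (swapB α β c) = c := by
  by_cases h1 : c = α
  · rw [h1, swapB_α hαβ, swapB_β hαβ]
  · by_cases h2 : c = β
    · rw [h2, swapB_β hαβ, swapB_α hαβ]
    · rw [show swapB α β c = c from by simp [swapB, h1, h2],
        show swapB α β c = c from by simp [swapB, h1, h2]]

lemma phi_invol (hαβ : α ≠ β) (w : FreeGroup B) :
    FreeGroup.map (swapB α β) (FreeGroup.map (swapB α β) w) = w := by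
  rw [FreeGroup.map.comp]
  have h : (swapB α β ∘ swapB α β) = id := funext (swapB_invol hαβ)
  rw [h, FreeGroup.map.id]

def flipA : AA → AA := fun p => (p.1, !p.2)

lemma sigma_invol (w : FreeGroup AA) :
    FreeGroup.map flipA (FreeGroup.map flipA w) = w := by
  rw [FreeGroup.map.comp]
  have h : (flipA ∘ flipA) = id := funext fun p => by simp [flipA]
  rw [h, FreeGroup.map.id]

end

end SG7

/-- A subgroup `S` is root-closed ("primitive"): `t ^ n ∈ S` with `n ≥ 1` implies `t ∈ S`. -/
def RootClosed {G : Type*} [Group G] (S : Subgroup G) : Prop :=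
  ∀ (t : G) (n : ℕ), 1 ≤ n → t ^ n ∈ S → t ∈ S
/-- The genus-`g` surface group with one boundary: free on `a_1, b_1, …, a_g, b_g`. -/
abbrev Hg (g : ℕ) : Type := FreeGroup (Fin g × Bool)

open scoped commutatorElement

/-- The boundary word `∂_g = ⁅a_1,b_1⁆ ⋯ ⁅a_g,b_g⁆`. -/
def bdry (g : ℕ) : Hg g :=
  ((List.finRange g).map fun i => ⁅FreeGroup.of (i, true), FreeGroup.of (i, false)⁆).prod

/-- `ν'_g(x)`: the number (in `ℕ∞`) of subgroups of `F` that arise as the range of an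
admissible genus-`g` representation of `x`. -/
noncomputable def nu' {F : Type*} [Group F] (g : ℕ) (x : F) : ℕ∞ :=
  {S : Subgroup F | ∃ h : Hg g →* F, Function.Injective h ∧ RootClosed h.range ∧
    h (bdry g) = x ∧ S = h.range}.encard

/-- `f'_F(g) = ⨆ x, ν'_g(x)` for `F = FreeGroup B`. -/
noncomputable def fprime (B : Type*) [Fintype B] (g : ℕ) : ℕ∞ :=
  ⨆ x : FreeGroup B, nu' g x

theorem stmt_4 (B : Type) [Fintype B] (hB : 1 < Fintype.card B) :
    2 ≤ fprime B 1 ∧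
    ∃ (x : FreeGroup B) (h h' : Hg 1 →* FreeGroup B),
      Function.Injective h ∧ RootClosed h.range ∧ h (bdry 1) = x ∧
      Function.Injective h' ∧ RootClosed h'.range ∧ h' (bdry 1) = x ∧
      h.range ≠ h'.range := by
  classical
  obtain ⟨α, β, hαβ⟩ := Fintype.exists_pair_of_one_lt_card hB
  set x : FreeGroup B := ⁅SG5.uu α β, SG5.vv α β⁆ with hx_def
  set h : Hg 1 →* FreeGroup B := SG6.hh α β with hh_def
  set φ : FreeGroup B →* FreeGroup B := FreeGroup.map (SG7.swapB α β) with hφ_def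
  set σ : Hg 1 →* Hg 1 := FreeGroup.map SG7.flipA with hσ_def
  set h' : Hg 1 →* FreeGroup B := φ.comp (h.comp σ) with hh'_def
  -- injectivity
  have hinj : Function.Injective h := SG6.hh_injective hαβ
  have hφinj : Function.Injective φ :=
    Function.LeftInverse.injective (g := φ) (SG7.phi_invol hαβ)
  have hσinj : Function.Injective σ :=
    Function.LeftInverse.injective (g := σ) SG7.sigma_invol
  have hσsurj : Function.Surjective σ :=
    Function.RightInverse.surjective (g := σ) SG7.sigma_invol
  have hinj' : Function.Injective h' := by
    rw [hh'_def]
    exact hφinj.comp (hinj.comp hσinj)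
  -- ranges
  have hsr : Set.range (SG6.fgen α β) = {SG5.uu α β, SG5.vv α β} := by
    ext w
    constructor
    · rintro ⟨p, rfl⟩
      by_cases hp : p.2 <;> simp [SG6.fgen, hp]
    · rintro (rfl | rfl)
      · exact ⟨((0 : Fin 1), true), by simp [SG6.fgen]⟩
      · exact ⟨((0 : Fin 1), false), by simp [SG6.fgen]⟩
  have hrange : h.range = SG3.TT α β := by
    rw [hh_def, show SG6.hh α β = FreeGroup.lift (SG6.fgen α β) from rfl,
      FreeGroup.range_lift_eq_closure, hsr, ← SG5.TT_eq_closure hαβ]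
  have hRC : RootClosed h.range := by
    rw [hrange]
    intro t n hn htn
    exact SG4.rootClosed_TT t n hn htn
  have hrange' : h'.range = Subgroup.map φ h.range := by
    rw [hh'_def, MonoidHom.range_comp, MonoidHom.range_comp,
      MonoidHom.range_eq_top.mpr hσsurj]
    congr 1
    rw [← MonoidHom.range_eq_map]
  have hRC' : RootClosed h'.range := by
    rw [hrange']
    intro t n hn htn
    obtain ⟨s, hs, hφs⟩ := Subgroup.mem_map.mp htn
    have h1 : (φ t) ^ n ∈ h.range := by
      have h2 : (φ t) ^ n = s := by
        rw [← _root_.map_pow, ← hφs, SG7.phi_invol hαβ]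
      rw [h2]; exact hs
    have h3 : φ t ∈ h.range := hRC (φ t) n hn h1
    exact Subgroup.mem_map.mpr ⟨φ t, h3, SG7.phi_invol hαβ t⟩
  -- boundary values
  have hbdry : bdry 1 = ⁅FreeGroup.of ((0 : Fin 1), true), FreeGroup.of ((0 : Fin 1), false)⁆ := by
    simp [bdry, List.finRange_succ]
  have hof : ∀ p : Fin 1 × Bool, h (FreeGroup.of p) = SG6.fgen α β p := fun p =>
    FreeGroup.lift_apply_of
  have hbx : h (bdry 1) = x := by
    rw [hbdry, map_commutatorElement, hof, hof]
    simp [SG6.fgen, hx_def]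
  have hφu : φ (SG5.uu α β) = FreeGroup.of β * FreeGroup.of β * (FreeGroup.of α)⁻¹ := by
    rw [hφ_def, SG5.uu]
    simp only [_root_.map_mul, _root_.map_inv, FreeGroup.map.of, SG7.swapB_α hαβ, SG7.swapB_β hαβ]
  have hφv : φ (SG5.vv α β) = FreeGroup.of α * FreeGroup.of α * FreeGroup.of β * FreeGroup.of α := by
    rw [hφ_def, SG5.vv]
    simp only [_root_.map_mul, FreeGroup.map.of, SG7.swapB_α hαβ, SG7.swapB_β hαβ]
  have hσof : ∀ p : Fin 1 × Bool, σ (FreeGroup.of p) = FreeGroup.of (p.1, !p.2) := fun p =>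
    FreeGroup.map.of
  have hof' : ∀ p : Fin 1 × Bool, h' (FreeGroup.of p) = φ (SG6.fgen α β (p.1, !p.2)) := by
    intro p
    rw [hh'_def]
    show φ (h (σ (FreeGroup.of p))) = _
    rw [hσof, hof]
  have hbx' : h' (bdry 1) = x := by
    rw [hbdry, map_commutatorElement, hof', hof']
    show ⁅φ (SG6.fgen α β ((0 : Fin 1), false)), φ (SG6.fgen α β ((0 : Fin 1), true))⁆ = x
    rw [show SG6.fgen α β ((0 : Fin 1), false) = SG5.vv α β from rfl,
      show SG6.fgen α β ((0 : Fin 1), true) = SG5.uu α β from rfl, hφv, hφu, hx_def,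
      SG5.uu, SG5.vv]
    group
  -- distinctness via ℤ/7
  set μ : FreeGroup B →* Multiplicative (ZMod 7) :=
    FreeGroup.lift (fun c => Multiplicative.ofAdd
      (if c = α then (1 : ZMod 7) else if c = β then 4 else 0)) with hμ_def
  have hμα : μ (FreeGroup.of α) = Multiplicative.ofAdd (1 : ZMod 7) := by
    rw [hμ_def, FreeGroup.lift_apply_of]; simp
  have hμβ : μ (FreeGroup.of β) = Multiplicative.ofAdd (4 : ZMod 7) := by
    rw [hμ_def, FreeGroup.lift_apply_of]; simp [Ne.symm hαβ]
  have hμu2 : μ (FreeGroup.of α * FreeGroup.of α * FreeGroup.of β * FreeGroup.of α) = 1 := by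
    rw [_root_.map_mul, _root_.map_mul, _root_.map_mul, hμα, hμβ]
    decide
  have hμv2 : μ (FreeGroup.of β * FreeGroup.of β * (FreeGroup.of α)⁻¹) = 1 := by
    rw [_root_.map_mul, _root_.map_mul, _root_.map_inv, hμα, hμβ]
    decide
  have hker : ∀ z, μ (h' z) = 1 := by
    have hcomp : μ.comp h' = 1 := by
      apply FreeGroup.ext_hom
      intro p
      show μ (h' (FreeGroup.of p)) = 1
      rw [hof']
      rcases p with ⟨i, b⟩
      cases b
      · show μ (φ (SG6.fgen α β (i, true))) = 1
        rw [show SG6.fgen α β (i, true) = SG5.uu α β from rfl, hφu]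
        exact hμv2
      · show μ (φ (SG6.fgen α β (i, false))) = 1
        rw [show SG6.fgen α β (i, false) = SG5.vv α β from rfl, hφv]
        exact hμu2
    intro z
    have := DFunLike.congr_fun hcomp z
    simpa using this
  have hμu : μ (SG5.uu α β) = Multiplicative.ofAdd (-2 : ZMod 7) := by
    rw [SG5.uu, _root_.map_mul, _root_.map_mul, _root_.map_inv, hμα, hμβ]
    decide
  have hne : h.range ≠ h'.range := by
    intro heq
    have hu_mem : SG5.uu α β ∈ h.range :=
      ⟨FreeGroup.of ((0 : Fin 1), true), by rw [hof]; rfl⟩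
    rw [heq] at hu_mem
    obtain ⟨z, hz⟩ := hu_mem
    have h1 := hker z
    rw [hz, hμu] at h1
    exact absurd h1 (by decide)
  -- conclusion
  have hmem1 : h.range ∈ {S : Subgroup (FreeGroup B) | ∃ hh : Hg 1 →* FreeGroup B,
      Function.Injective hh ∧ RootClosed hh.range ∧ hh (bdry 1) = x ∧ S = hh.range} :=
    ⟨h, hinj, hRC, hbx, rfl⟩
  have hmem2 : h'.range ∈ {S : Subgroup (FreeGroup B) | ∃ hh : Hg 1 →* FreeGroup B,
      Function.Injective hh ∧ RootClosed hh.range ∧ hh (bdry 1) = x ∧ S = hh.range} :=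
    ⟨h', hinj', hRC', hbx', rfl⟩
  have h2le : (2 : ℕ∞) ≤ nu' 1 x := by
    have h1lt : 1 < nu' 1 x :=
      Set.one_lt_encard_iff.mpr ⟨h.range, h'.range, hmem1, hmem2, hne⟩
    have := (ENat.add_one_le_iff (by decide : (1 : ℕ∞) ≠ ⊤)).mpr h1lt
    simpa [one_add_one_eq_two] using this
  refine ⟨le_trans h2le (le_iSup (fun y => nu' 1 y) x),
    x, h, h', hinj, hRC, hbx, hinj', hRC', hbx', hne⟩
end

section
/- Every (1/4)-map φ : FreeGroup B1 →* FreeGroup B2 is injective. -/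
/-- The number of occurrences of `p` as a contiguous sublist of `L`, counted once for
each starting position. -/
noncomputable def occCount {γ : Type*} (p L : List γ) : ℕ :=
  letI := Classical.decEq γ
  ((List.range (L.length + 1)).filter fun i => decide (p <+: L.drop i)).length

/-- `m(φ)`: the minimal length of the image of a generator. -/
noncomputable def mphi {B1 B2 : Type*} [Fintype B1] [Nonempty B1]
    (φ : FreeGroup B1 →* FreeGroup B2) : ℕ :=
  letI := Classical.decEq B2
  Finset.univ.inf' Finset.univ_nonempty fun u : B1 => FreeGroup.norm (φ (FreeGroup.of u))

/-- `φ` is an `α`-map: all generators have nontrivial image and every reduced word of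
length `≥ α·m(φ)` occurs (counting also occurrences of its inverse) at most once among
the reduced words of the images of the generators. -/
def IsAlphaMap {B1 B2 : Type*} [Fintype B1] [Nonempty B1] (α : ℝ)
    (φ : FreeGroup B1 →* FreeGroup B2) : Prop :=
  letI := Classical.decEq B2
  (∀ u : B1, φ (FreeGroup.of u) ≠ 1) ∧
  ∀ w : FreeGroup B2, w ≠ 1 → α * (mphi φ : ℝ) ≤ (FreeGroup.norm w : ℝ) →
    (∑ u : B1, (occCount (FreeGroup.toWord w) (FreeGroup.toWord (φ (FreeGroup.of u)))
      + occCount (FreeGroup.toWord w⁻¹) (FreeGroup.toWord (φ (FreeGroup.of u))))) ≤ 1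

namespace AlphaAux

variable {α : Type*}

/-- Adjacency condition satisfied by reduced words. -/
def Rr : (α × Bool) → (α × Bool) → Prop := fun a b => b ≠ (a.1, !a.2)

lemma not_chain'_exists {L : List (α × Bool)} (h : ¬ List.Chain' Rr L) :
    ∃ (L₁ L₂ : List (α × Bool)) (x : α) (c : Bool),
      L = L₁ ++ (x, c) :: (x, !c) :: L₂ := by
  induction L with
  | nil => exact absurd List.isChain_nil h
  | cons a L ih =>
    match L, h with
    | [], h => exact absurd (List.isChain_singleton a) h
    | b :: L, h =>
      replace h : ¬ (Rr a b ∧ List.Chain' Rr (b :: L)) := fun hc => h (List.isChain_cons_cons.mpr hc)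
      by_cases hR : Rr a b
      · have h' : ¬ List.Chain' Rr (b :: L) := fun hc => h ⟨hR, hc⟩
        obtain ⟨L₁, L₂, x, c, hEq⟩ := ih h'
        exact ⟨a :: L₁, L₂, x, c, by rw [List.cons_append, ← hEq]⟩
      · rw [Rr, not_not] at hR
        exact ⟨[], L, a.1, a.2, by rw [← hR]; rfl⟩

lemma invRev_append (l₁ l₂ : List (α × Bool)) :
    FreeGroup.invRev (l₁ ++ l₂) = FreeGroup.invRev l₂ ++ FreeGroup.invRev l₁ := by
  simp [FreeGroup.invRev]

lemma invRev_cons (a : α × Bool) (l : List (α × Bool)) :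
    FreeGroup.invRev (a :: l) = FreeGroup.invRev l ++ [(a.1, !a.2)] := by
  simp [FreeGroup.invRev]

lemma infix_invRev {l L : List (α × Bool)} (h : l <:+: L) :
    FreeGroup.invRev l <:+: FreeGroup.invRev L := by
  obtain ⟨s, t, rfl⟩ := h
  exact ⟨FreeGroup.invRev t, FreeGroup.invRev s, by simp [invRev_append]⟩

lemma infix_invRev_iff {l L : List (α × Bool)} :
    l <:+: FreeGroup.invRev L ↔ FreeGroup.invRev l <:+: L := by
  constructor
  · intro h
    simpa [FreeGroup.invRev_invRev] using infix_invRev h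
  · intro h
    simpa [FreeGroup.invRev_invRev] using infix_invRev h

section DecEq
variable [DecidableEq α]

lemma chain'_of_reduced {L : List (α × Bool)} (h : FreeGroup.reduce L = L) :
    List.Chain' Rr L := by
  by_contra hc
  obtain ⟨L₁, L₂, x, c, hEq⟩ := not_chain'_exists hc
  exact FreeGroup.reduce.not (h.trans hEq)

lemma reduced_of_chain' {L : List (α × Bool)} (h : List.Chain' Rr L) :
    FreeGroup.reduce L = L := by
  rcases (FreeGroup.reduce.red (L := L)).cases_head with h' | ⟨c, hs, _⟩
  · exact h'.symm
  · exfalso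
    cases hs with
    | @not L₁ L₂ x b =>
      have hinf : [(x, b), (x, !b)] <:+: L₁ ++ (x, b) :: (x, !b) :: L₂ :=
        ⟨L₁, L₂, by simp⟩
      have := List.isChain_pair.mp (h.infix hinf)
      exact this rfl

lemma reduced_infix {L l : List (α × Bool)} (h : FreeGroup.reduce L = L) (h' : l <:+: L) :
    FreeGroup.reduce l = l :=
  reduced_of_chain' ((chain'_of_reduced h).infix h')

open FreeGroup in
lemma cancel (A : List (α × Bool)) : ∀ B : List (α × Bool), reduce A = A → reduce B = B →
    ∃ n, n ≤ A.length ∧ n ≤ B.length ∧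
      reduce (A ++ B) = A.take (A.length - n) ++ B.drop n ∧
      A.drop (A.length - n) = invRev (B.take n) := by
  induction A using List.reverseRecOn with
  | nil =>
    intro B _ hB
    exact ⟨0, by simp [hB, invRev]⟩
  | append_singleton A₀ a ih =>
    intro B hA hB
    match B with
    | [] => exact ⟨0, by simp [hA, invRev]⟩
    | b :: B₀ =>
      by_cases hb : b = (a.1, !a.2)
      · have hA₀ : reduce A₀ = A₀ := reduced_infix hA ⟨[], [a], by simp⟩
        have hB₀ : reduce B₀ = B₀ := reduced_infix hB ⟨[b], [], by simp⟩
        obtain ⟨n₀, hn₀A, hn₀B, hred, hdrop⟩ := ih B₀ hA₀ hB₀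
        have hstep : Red.Step ((A₀ ++ [a]) ++ b :: B₀) (A₀ ++ B₀) := by
          subst hb
          have : (A₀ ++ [a]) ++ (a.1, !a.2) :: B₀ = A₀ ++ (a.1, a.2) :: (a.1, !a.2) :: B₀ := by
            simp
          rw [this]
          exact Red.Step.not
        refine ⟨n₀ + 1, by simp; omega, by simp; omega, ?_, ?_⟩
        · rw [reduce.Step.eq hstep, hred]
          have h1 : (A₀ ++ [a]).length - (n₀ + 1) = A₀.length - n₀ := by simp
          rw [h1, List.take_append_of_le_length (by omega), List.drop_succ_cons]
        · have h1 : (A₀ ++ [a]).length - (n₀ + 1) = A₀.length - n₀ := by simp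
          rw [h1, List.drop_append_of_le_length (by omega), hdrop,
            List.take_succ_cons, invRev_cons]
          subst hb
          simp
      · refine ⟨0, by simp, by simp, ?_, by simp [invRev]⟩
        have : reduce ((A₀ ++ [a]) ++ b :: B₀) = (A₀ ++ [a]) ++ b :: B₀ := by
          refine reduced_of_chain' (List.IsChain.append (chain'_of_reduced hA)
            (chain'_of_reduced hB) ?_)
          intro x hx y hy
          simp at hx hy
          subst hx; subst hy
          exact hb
        rw [this]
        rw [Nat.sub_zero, List.take_of_length_le le_rfl, List.drop_zero]

end DecEq
end AlphaAux

lemma one_le_occCount {γ : Type*} {p L : List γ} (h : p <:+: L) : 1 ≤ occCount p L := by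
  letI := Classical.decEq γ
  obtain ⟨s, t, rfl⟩ := h
  rw [occCount]
  refine List.length_pos_iff.mpr (List.ne_nil_of_mem (a := s.length) ?_)
  rw [List.mem_filter, List.mem_range]
  constructor
  · simp
  · rw [decide_eq_true_eq, List.append_assoc, List.drop_left]
    exact ⟨t, rfl⟩

theorem stmt_9 {B1 B2 : Type} [Fintype B1] [Nonempty B1] [Fintype B2] [Nonempty B2]
    (φ : FreeGroup B1 →* FreeGroup B2) (hφ : IsAlphaMap (1 / 4 : ℝ) φ) :
    Function.Injective φ := by
  letI := Classical.decEq B2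
  letI := Classical.decEq B1
  have hφ' : (∀ u : B1, φ (FreeGroup.of u) ≠ 1) ∧
      ∀ w : FreeGroup B2, w ≠ 1 → (1 / 4 : ℝ) * (mphi φ : ℝ) ≤ (FreeGroup.norm w : ℝ) →
        (∑ u : B1, (occCount (FreeGroup.toWord w) (FreeGroup.toWord (φ (FreeGroup.of u)))
          + occCount (FreeGroup.toWord w⁻¹) (FreeGroup.toWord (φ (FreeGroup.of u))))) ≤ 1 := hφ
  obtain ⟨h1, h2⟩ := hφ'
  have hM : mphi φ = Finset.univ.inf' Finset.univ_nonempty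
      (fun u : B1 => FreeGroup.norm (φ (FreeGroup.of u))) := rfl
  have hMle : ∀ u : B1, mphi φ ≤ FreeGroup.norm (φ (FreeGroup.of u)) := by
    intro u
    rw [hM]
    exact Finset.inf'_le _ (Finset.mem_univ u)
  have hM1 : 1 ≤ mphi φ := by
    rw [hM]
    exact Finset.le_inf' _ _ fun u _ =>
      Nat.one_le_iff_ne_zero.mpr fun h0 => h1 u (FreeGroup.norm_eq_zero.mp h0)
  set t0 : ℕ := (mphi φ + 3) / 4 with ht0def
  have ht0pos : 0 < t0 := by omega
  have ht40 : mphi φ ≤ 4 * t0 := by omega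
  have h2t0 : 2 * t0 ≤ mphi φ + 1 := by omega
  set Y : B1 × Bool → List (B2 × Bool) := fun x => (φ (FreeGroup.mk [x])).toWord with hYdef
  have hYt : ∀ u : B1, Y (u, true) = (φ (FreeGroup.of u)).toWord := fun u => rfl
  have hYf : ∀ u : B1, Y (u, false) = FreeGroup.invRev ((φ (FreeGroup.of u)).toWord) := by
    intro u
    have hmk : FreeGroup.mk [(u, false)] = (FreeGroup.of u)⁻¹ := by
      have hir : FreeGroup.invRev [(u, true)] = [(u, false)] := by
        simp [FreeGroup.invRev]
      rw [FreeGroup.of, FreeGroup.inv_mk, hir]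
    rw [hYdef]
    simp only [hmk, map_inv, FreeGroup.toWord_inv]
  have hYred : ∀ x, FreeGroup.reduce (Y x) = Y x := fun x => FreeGroup.reduce_toWord _
  have hYM : ∀ x, mphi φ ≤ (Y x).length := by
    rintro ⟨u, e⟩
    cases e
    · rw [hYf u, FreeGroup.invRev_length]
      exact hMle u
    · rw [hYt u]
      exact hMle u
  -- the "no long common piece" lemma
  have hNL : ∀ x y : B1 × Bool, y ≠ (x.1, !x.2) → ∀ d : List (B2 × Bool),
      d.length = t0 → FreeGroup.reduce d = d →
      FreeGroup.invRev d <:+: Y x → d <:+: Y y → False := by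
    intro x y hxy d hdlen hdred hdx hdy
    have hd0 : d ≠ [] := List.length_pos_iff.mp (by rw [hdlen]; exact ht0pos)
    have htw : FreeGroup.toWord (FreeGroup.mk d) = d := by
      rw [FreeGroup.toWord_mk, hdred]
    have htwi : FreeGroup.toWord (FreeGroup.mk d)⁻¹ = FreeGroup.invRev d := by
      rw [FreeGroup.toWord_inv, htw]
    have hne : FreeGroup.mk d ≠ 1 := fun h => hd0 (by rw [← htw, h, FreeGroup.toWord_one])
    have hnorm : FreeGroup.norm (FreeGroup.mk d) = t0 := by
      unfold FreeGroup.norm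
      rw [htw, hdlen]
    have hkey := h2 (FreeGroup.mk d) hne (by
      rw [hnorm]
      have hc : (mphi φ : ℝ) ≤ 4 * (t0 : ℝ) := by exact_mod_cast ht40
      linarith)
    rw [htw, htwi] at hkey
    have hsum2 : 2 ≤ ∑ u : B1, (occCount d (FreeGroup.toWord (φ (FreeGroup.of u)))
        + occCount (FreeGroup.invRev d) (FreeGroup.toWord (φ (FreeGroup.of u)))) := by
      clear hkey
      obtain ⟨ux, ex⟩ := x
      obtain ⟨uy, ey⟩ := y
      have hox : 1 ≤ occCount d (FreeGroup.toWord (φ (FreeGroup.of ux)))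
          + occCount (FreeGroup.invRev d) (FreeGroup.toWord (φ (FreeGroup.of ux))) := by
        cases ex
        · rw [hYf ux] at hdx
          have h' := AlphaAux.infix_invRev_iff.mp hdx
          rw [FreeGroup.invRev_invRev] at h'
          have := one_le_occCount h'
          omega
        · rw [hYt ux] at hdx
          have := one_le_occCount hdx
          omega
      have hoy : 1 ≤ occCount d (FreeGroup.toWord (φ (FreeGroup.of uy)))
          + occCount (FreeGroup.invRev d) (FreeGroup.toWord (φ (FreeGroup.of uy))) := by
        cases ey
        · rw [hYf uy] at hdy
          have h' := AlphaAux.infix_invRev_iff.mp hdy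
          have := one_le_occCount h'
          omega
        · rw [hYt uy] at hdy
          have := one_le_occCount hdy
          omega
      by_cases hu : ux = uy
      · subst hu
        have hee : ey = ex := by
          rcases hx2 : ex with _ | _ <;> rcases hy2 : ey with _ | _ <;> simp_all
        subst hee
        have hb : 2 ≤ occCount d (FreeGroup.toWord (φ (FreeGroup.of ux)))
            + occCount (FreeGroup.invRev d) (FreeGroup.toWord (φ (FreeGroup.of ux))) := by
          cases ey
          · rw [hYf ux] at hdx hdy
            have h1' := AlphaAux.infix_invRev_iff.mp hdx
            rw [FreeGroup.invRev_invRev] at h1'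
            have h2' := AlphaAux.infix_invRev_iff.mp hdy
            have := one_le_occCount h1'
            have := one_le_occCount h2'
            omega
          · rw [hYt ux] at hdx hdy
            have := one_le_occCount hdx
            have := one_le_occCount hdy
            omega
        calc 2 ≤ occCount d (FreeGroup.toWord (φ (FreeGroup.of ux)))
              + occCount (FreeGroup.invRev d) (FreeGroup.toWord (φ (FreeGroup.of ux))) := hb
          _ ≤ ∑ u : B1, (occCount d (FreeGroup.toWord (φ (FreeGroup.of u)))
              + occCount (FreeGroup.invRev d) (FreeGroup.toWord (φ (FreeGroup.of u)))) :=
            Finset.single_le_sum (f := fun u => occCount d (FreeGroup.toWord (φ (FreeGroup.of u)))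
              + occCount (FreeGroup.invRev d) (FreeGroup.toWord (φ (FreeGroup.of u))))
              (fun u _ => Nat.zero_le _) (Finset.mem_univ _)
      · calc 2 ≤ (occCount d (FreeGroup.toWord (φ (FreeGroup.of ux)))
              + occCount (FreeGroup.invRev d) (FreeGroup.toWord (φ (FreeGroup.of ux))))
              + (occCount d (FreeGroup.toWord (φ (FreeGroup.of uy)))
              + occCount (FreeGroup.invRev d) (FreeGroup.toWord (φ (FreeGroup.of uy)))) := by omega
          _ = ∑ u ∈ ({ux, uy} : Finset B1), (occCount d (FreeGroup.toWord (φ (FreeGroup.of u)))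
              + occCount (FreeGroup.invRev d) (FreeGroup.toWord (φ (FreeGroup.of u)))) :=
            (Finset.sum_pair (f := fun u => occCount d (FreeGroup.toWord (φ (FreeGroup.of u)))
              + occCount (FreeGroup.invRev d) (FreeGroup.toWord (φ (FreeGroup.of u)))) hu).symm
          _ ≤ ∑ u : B1, (occCount d (FreeGroup.toWord (φ (FreeGroup.of u)))
              + occCount (FreeGroup.invRev d) (FreeGroup.toWord (φ (FreeGroup.of u)))) :=
            Finset.sum_le_sum_of_subset (Finset.subset_univ _)
    omega
  -- main induction: the image of a reduced word keeps a long prefix of the first block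
  have main : ∀ (L : List (B1 × Bool)) (x : B1 × Bool), List.Chain' AlphaAux.Rr (x :: L) →
      ∃ n rest, n < t0 ∧ (φ (FreeGroup.mk (x :: L))).toWord
        = (Y x).take ((Y x).length - n) ++ rest := by
    intro L
    induction L with
    | nil =>
      intro x _
      exact ⟨0, [], ht0pos, by simp [hYdef]⟩
    | cons y L' ih =>
      intro x hch
      obtain ⟨n', rest', hn', hB⟩ := ih y hch.tail
      set B := (φ (FreeGroup.mk (y :: L'))).toWord with hBdef
      have hmul : (φ (FreeGroup.mk (x :: y :: L'))).toWord = FreeGroup.reduce (Y x ++ B) := by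
        have hsplit : FreeGroup.mk (x :: y :: L')
            = FreeGroup.mk [x] * FreeGroup.mk (y :: L') := by
          rw [FreeGroup.mul_mk, List.singleton_append]
        rw [hsplit, map_mul]
        conv_lhs => rw [← FreeGroup.mk_toWord (x := φ (FreeGroup.mk [x])),
          ← FreeGroup.mk_toWord (x := φ (FreeGroup.mk (y :: L'))), FreeGroup.mul_mk]
        rw [FreeGroup.toWord_mk]
      obtain ⟨n, hnA, hnB, hred, hdrop⟩ :=
        AlphaAux.cancel (Y x) B (hYred x) (FreeGroup.reduce_toWord _)
      have hnt : n < t0 := by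
        by_contra hge
        push_neg at hge
        have ht0B : t0 ≤ B.length := le_trans hge hnB
        set d : List (B2 × Bool) := B.take t0 with hd
        have hdlen : d.length = t0 := by
          rw [hd, List.length_take]
          omega
        have hdred : FreeGroup.reduce d = d :=
          AlphaAux.reduced_infix (FreeGroup.reduce_toWord _) (List.take_prefix t0 B).isInfix
        have hYylen : t0 ≤ (Y y).length - n' := by
          have := hYM y
          omega
        have hdy : d <:+: Y y := by
          have hdtake : d = (Y y).take t0 := by
            rw [hd, hB, List.take_append_of_le_length (by
              rw [List.length_take]
              have := hYM y
              omega), List.take_take, min_eq_left (by omega)]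
          rw [hdtake]
          exact (List.take_prefix _ _).isInfix
        have hdx : FreeGroup.invRev d <:+: Y x := by
          have hsum : n = t0 + (n - t0) := by omega
          have h1 : B.take n = d ++ (B.drop t0).take (n - t0) := by
            rw [hd, ← List.take_add, ← hsum]
          have h3 : FreeGroup.invRev d <:+: FreeGroup.invRev (B.take n) :=
            ⟨FreeGroup.invRev ((B.drop t0).take (n - t0)), [],
              by rw [h1, AlphaAux.invRev_append, List.append_nil]⟩
          rw [← hdrop] at h3
          exact h3.trans (List.drop_suffix _ _).isInfix
        exact hNL x y (List.isChain_cons_cons.mp hch).1 d hdlen hdred hdx hdy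
      exact ⟨n, B.drop n, hnt, by rw [hmul, hred]⟩
  -- kernel is trivial
  have hker : ∀ w : FreeGroup B1, φ w = 1 → w = 1 := by
    intro w hw
    by_contra hw1
    have hL : w.toWord ≠ [] := fun h => hw1 (FreeGroup.toWord_eq_nil_iff.mp h)
    have hch : List.Chain' AlphaAux.Rr w.toWord :=
      AlphaAux.chain'_of_reduced (FreeGroup.reduce_toWord w)
    obtain ⟨x, L, hxL⟩ := List.exists_cons_of_ne_nil hL
    obtain ⟨n, rest, hn, heq⟩ := main L x (hxL ▸ hch)
    have hww : FreeGroup.mk (x :: L) = w := by rw [← hxL, FreeGroup.mk_toWord]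
    rw [hww, hw, FreeGroup.toWord_one] at heq
    have hlen := congrArg List.length heq
    rw [List.length_nil, List.length_append, List.length_take] at hlen
    have hYx := hYM x
    have ht0M : t0 ≤ mphi φ := by omega
    omega
  intro a b hab
  have h1ab : φ (a * b⁻¹) = 1 := by rw [map_mul, map_inv, hab, mul_inv_cancel]
  exact mul_inv_eq_one.mp (hker _ h1ab)
end
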